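/- arXiv:0812.1039 — 3 statements merged into one kernel-verified Lean document; each statement's English description precedes it below -/
import Mathlib

section
/- Let r ≥ 2 be an integer. A complex (r−1)×(r−1) matrix A satisfies C(p,q)·A = A·C(−q,p) for all integers p, q if and only if A is a scalar multiple of the matrix S = ([jk])_{1≤j,k≤r−1}, whose (j,k) entry is the quantized integer [jk] = sin(jkπ/r)/sin(π/r). In particular, up to multiplication by a nonzero scalar, S is the unique invertible matrix with this property. -/
open Complex Matrix

/-- `t = exp(iπ/(2r))`. -/
noncomputable def tconst (r : ℕ) : ℂ := Complex.exp (Real.pi * Complex.I / (2 * r))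

/-- `ε(k,j) = 1` if `j ≡ k (mod 2r)`, `−1` if `j ≡ −k (mod 2r)`, `0` otherwise. -/
def eps (r : ℕ) (k j : ℤ) : ℤ :=
  if (2 * (r : ℤ)) ∣ (j - k) then 1 else if (2 * (r : ℤ)) ∣ (j + k) then -1 else 0

/-- The matrix of the Weyl quantization of `2 cos 2π(px+qy)` in the basis `ζ_1, …, ζ_{r−1}`:
`C(p,q)_{k,m} = t^{−pq} (t^{2qm} ε(k, m−p) + t^{−2qm} ε(k, m+p))`, with indices shifted so that
the index `k : Fin (r-1)` corresponds to `k+1 ∈ {1, …, r−1}`. -/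
noncomputable def Cmat (r : ℕ) (p q : ℤ) : Matrix (Fin (r - 1)) (Fin (r - 1)) ℂ :=
  Matrix.of fun k m =>
    tconst r ^ (-(p * q)) *
      (tconst r ^ (2 * q * ((m : ℤ) + 1)) * (eps r ((k : ℤ) + 1) (((m : ℤ) + 1) - p) : ℂ) +
       tconst r ^ (-(2 * q * ((m : ℤ) + 1))) * (eps r ((k : ℤ) + 1) (((m : ℤ) + 1) + p) : ℂ))

/-- The quantized integer `[n] = sin(nπ/r)/sin(π/r)`. -/
noncomputable def qint (r : ℕ) (n : ℤ) : ℝ :=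
  Real.sin (n * Real.pi / r) / Real.sin (Real.pi / r)

/-- The `S`-matrix `S_{j,k} = [jk]`, `1 ≤ j, k ≤ r−1`. -/
noncomputable def Smat (r : ℕ) : Matrix (Fin (r - 1)) (Fin (r - 1)) ℂ :=
  Matrix.of fun j k => (qint r (((j : ℤ) + 1) * ((k : ℤ) + 1)) : ℂ)

noncomputable def sC (r : ℕ) (n : ℤ) : ℂ := tconst r ^ (2*n) - tconst r ^ (-(2*n))

lemma tne (r : ℕ) : tconst r ≠ 0 := Complex.exp_ne_zero _

lemma t_zpow (r : ℕ) (n : ℤ) : tconst r ^ n = Complex.exp (n * (Real.pi * Complex.I) / (2*r)) := by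
  rw [tconst, ← Complex.exp_int_mul]; ring_nf

lemma t_sq_r (r : ℕ) (hr : 2 ≤ r) : tconst r ^ (2*(r:ℤ)) = -1 := by
  have hrc : ((r:ℕ):ℂ) ≠ 0 := Nat.cast_ne_zero.mpr (by omega)
  rw [t_zpow]
  rw [show ((2*(r:ℤ) : ℤ):ℂ) * (Real.pi * Complex.I) / (2*(r:ℂ)) = Real.pi * Complex.I by
    push_cast; field_simp]
  exact Complex.exp_pi_mul_I

lemma t_per (r : ℕ) (hr : 2 ≤ r) (x y : ℤ) : tconst r ^ (x + 4*(r:ℤ)*y) = tconst r ^ x := by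
  rw [zpow_add₀ (tne r), show (4*(r:ℤ)*y) = 2*(r:ℤ)*(2*y) by ring, _root_.zpow_mul, t_sq_r r hr]
  rw [show ((2:ℤ)*y) = 2*y by ring, _root_.zpow_mul]
  norm_num

lemma sC_neg (r : ℕ) (n : ℤ) : sC r (-n) = - sC r n := by
  unfold sC
  rw [show (2*(-n) : ℤ) = -(2*n) by ring, neg_neg]
  ring

lemma sC_per (r : ℕ) (hr : 2 ≤ r) (x y : ℤ) : sC r (x + 2*(r:ℤ)*y) = sC r x := by
  unfold sC
  rw [show (2*(x + 2*(r:ℤ)*y) : ℤ) = 2*x + 4*(r:ℤ)*y by ring, t_per r hr,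
    show (-(2*x + 4*(r:ℤ)*y) : ℤ) = -(2*x) + 4*(r:ℤ)*(-y) by ring, t_per r hr]

lemma sC_zero (r : ℕ) : sC r 0 = 0 := by simp [sC]

lemma sC_dvd (r : ℕ) (hr : 2 ≤ r) {n : ℤ} (h : (r:ℤ) ∣ n) : sC r n = 0 := by
  obtain ⟨c, rfl⟩ := h
  unfold sC
  rw [show (2*((r:ℤ)*c) : ℤ) = 2*(r:ℤ)*c by ring, _root_.zpow_mul, t_sq_r r hr,
    show (-(2*(r:ℤ)*c) : ℤ) = 2*(r:ℤ)*(-c) by ring, _root_.zpow_mul, t_sq_r r hr,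
    _root_.zpow_neg, ← _root_.inv_zpow, show ((-1:ℂ))⁻¹ = -1 by norm_num, sub_self]

lemma sC_ne (r : ℕ) (hr : 2 ≤ r) {n : ℤ} (h : ¬ (r:ℤ) ∣ n) : sC r n ≠ 0 := by
  intro h0
  apply h
  have h1 : tconst r ^ (2*n) = tconst r ^ (-(2*n)) := sub_eq_zero.mp h0
  have h2 : tconst r ^ (4*n) = 1 := by
    calc tconst r ^ (4*n) = tconst r ^ (2*n) * tconst r ^ (2*n) := by
          rw [← zpow_add₀ (tne r)]; ring_nf
    _ = tconst r ^ (-(2*n)) * tconst r ^ (2*n) := by rw [h1]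
    _ = 1 := by rw [← zpow_add₀ (tne r)]; simp
  rw [t_zpow, Complex.exp_eq_one_iff] at h2
  obtain ⟨k, hk⟩ := h2
  have hπ : (Real.pi:ℂ) ≠ 0 := by exact_mod_cast Real.pi_ne_zero
  have hrc : ((r:ℕ):ℂ) ≠ 0 := Nat.cast_ne_zero.mpr (by omega)
  have h4 : (4:ℂ) * Real.pi * Complex.I ≠ 0 := by
    simp [hπ, Complex.I_ne_zero]
  have hn : (n:ℂ) = (k:ℂ) * (r:ℂ) := by
    field_simp at hk
    apply mul_right_cancel₀ h4
    push_cast at hk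
    linear_combination (Real.pi * Complex.I) * hk
  exact ⟨k, by exact_mod_cast (by rw [hn]; ring : (n:ℂ) = (r:ℂ)*(k:ℂ))⟩

lemma sin_eq_sC (r : ℕ) (hr : 2 ≤ r) (n : ℤ) :
    Complex.sin ((n:ℂ) * Real.pi / r) = sC r n * (-Complex.I) / 2 := by
  have hrc : ((r:ℕ):ℂ) ≠ 0 := Nat.cast_ne_zero.mpr (by omega)
  rw [Complex.sin,
    show -((n:ℂ)*Real.pi/r) * Complex.I = ((-(2*n) : ℤ):ℂ) * (Real.pi*Complex.I)/(2*(r:ℂ)) by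
      push_cast; field_simp,
    show ((n:ℂ)*Real.pi/r) * Complex.I = (((2*n) : ℤ):ℂ) * (Real.pi*Complex.I)/(2*(r:ℂ)) by
      push_cast; field_simp]
  rw [show (((-(2*n) : ℤ)):ℂ) * (Real.pi*Complex.I)/(2*(r:ℂ))
       = ((-(2*n) : ℤ)) * (Real.pi*Complex.I)/(2*((r:ℕ):ℂ)) by norm_num,
    show ((((2*n) : ℤ)):ℂ) * (Real.pi*Complex.I)/(2*(r:ℂ))
       = (((2*n) : ℤ)) * (Real.pi*Complex.I)/(2*((r:ℕ):ℂ)) by norm_num,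
    ← t_zpow, ← t_zpow, sC]
  ring

lemma qint_eq (r : ℕ) (hr : 2 ≤ r) (n : ℤ) : ((qint r n : ℝ):ℂ) = sC r n / sC r 1 := by
  have h2 : Complex.sin ((Real.pi:ℂ) / r) = sC r 1 * (-Complex.I)/2 := by
    simpa using sin_eq_sC r hr 1
  rw [qint, Complex.ofReal_div, Complex.ofReal_sin, Complex.ofReal_sin,
    show ((n * Real.pi / r : ℝ):ℂ) = (n:ℂ) * Real.pi / r by push_cast; ring,
    show ((Real.pi / r : ℝ):ℂ) = (Real.pi:ℂ) / r by push_cast; ring,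
    sin_eq_sC r hr n, h2]
  have hI : (-Complex.I)/2 ≠ 0 := by simp [Complex.I_ne_zero]
  rw [show sC r n * -Complex.I/2 = sC r n * (-Complex.I/2) by ring,
    show sC r 1 * -Complex.I/2 = sC r 1 * (-Complex.I/2) by ring,
    mul_div_mul_right _ _ hI]

lemma not_dvd_2k (r : ℕ) {k : ℤ} (h1 : 0 < k) (h2 : k < r) : ¬ (2*(r:ℤ)) ∣ 2*k := by
  rintro ⟨c, hc⟩
  have hk : k = (r:ℤ)*c := by linarith
  have : (r:ℤ) ≤ k := Int.le_of_dvd h1 ⟨c, hk⟩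
  omega

lemma eps_per (r : ℕ) (k j y : ℤ) : eps r k (j + 2*(r:ℤ)*y) = eps r k j := by
  unfold eps
  simp only [show j + 2*(r:ℤ)*y - k = (j-k) + (2*(r:ℤ))*y by ring,
    show j + 2*(r:ℤ)*y + k = (j+k) + (2*(r:ℤ))*y by ring,
    dvd_add_left (⟨y, rfl⟩ : (2*(r:ℤ)) ∣ 2*(r:ℤ)*y)]

lemma eps_neg_right (r : ℕ) {k : ℤ} (hk : ¬ (2*(r:ℤ)) ∣ 2*k) (j : ℤ) :
    eps r k (-j) = - eps r k j := by
  unfold eps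
  simp only [show -j - k = -(j+k) by ring, show -j + k = -(j - k) by ring, dvd_neg]
  by_cases h1 : (2*(r:ℤ)) ∣ (j-k) <;> by_cases h2 : (2*(r:ℤ)) ∣ (j+k) <;>
    simp [h1, h2]
  exact absurd (by simpa [show j+k - (j-k) = 2*k by ring] using h2.sub h1) hk

lemma eps_split (r : ℕ) {k : ℤ} (hk : ¬ (2*(r:ℤ)) ∣ 2*k) (j : ℤ) :
    ((eps r k j : ℤ):ℂ) =
      (if (2*(r:ℤ)) ∣ (j - k) then (1:ℂ) else 0) - (if (2*(r:ℤ)) ∣ (j + k) then (1:ℂ) else 0) := by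
  unfold eps
  by_cases h1 : (2*(r:ℤ)) ∣ (j-k) <;> by_cases h2 : (2*(r:ℤ)) ∣ (j+k) <;>
    simp [h1, h2]
  exact absurd (by simpa [show j+k - (j-k) = 2*k by ring] using h2.sub h1) hk

lemma eps_split2 (r : ℕ) {j : ℤ} (hj : ¬ (2*(r:ℤ)) ∣ 2*j) (m : ℤ) :
    ((eps r m j : ℤ):ℂ) =
      (if (2*(r:ℤ)) ∣ (m - j) then (1:ℂ) else 0) - (if (2*(r:ℤ)) ∣ (m + j) then (1:ℂ) else 0) := by
  unfold eps
  simp only [show j - m = -(m - j) by ring, dvd_neg, show j + m = m + j by ring]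
  by_cases h1 : (2*(r:ℤ)) ∣ (m-j) <;> by_cases h2 : (2*(r:ℤ)) ∣ (m+j) <;>
    simp [h1, h2]
  exact absurd (by simpa [show m+j - (m-j) = 2*j by ring] using h2.sub h1) hj

lemma sum_delta (r : ℕ) (hr : 2 ≤ r) (g : ℤ → ℂ) (hper : ∀ x y, g (x + 2*(r:ℤ)*y) = g x)
    (a : ℤ) :
    ∑ m ∈ Finset.range (2*r), (if (2*(r:ℤ)) ∣ ((m:ℤ) - a) then (1:ℂ) else 0) * g m = g a := by
  have h2r : (0:ℤ) < 2*(r:ℤ) := by positivity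
  have hne : (2*(r:ℤ)) ≠ 0 := by omega
  set m₀ : ℕ := (a % (2*(r:ℤ))).toNat with hm₀
  have hm₀' : (m₀:ℤ) = a % (2*(r:ℤ)) := Int.toNat_of_nonneg (Int.emod_nonneg a hne)
  have hlt : a % (2*(r:ℤ)) < 2*(r:ℤ) := Int.emod_lt_of_pos a h2r
  have hmem : m₀ ∈ Finset.range (2*r) := by
    refine Finset.mem_range.mpr ?_
    have : (m₀:ℤ) < ((2*r : ℕ):ℤ) := by push_cast; omega
    exact_mod_cast this
  have key := Int.mul_ediv_add_emod a (2*(r:ℤ))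
  rw [Finset.sum_eq_single_of_mem m₀ hmem ?side]
  · rw [if_pos ⟨-(a / (2*(r:ℤ))), by rw [hm₀']; linarith⟩, one_mul]
    have ha : a = (m₀:ℤ) + 2*(r:ℤ)*(a/(2*(r:ℤ))) := by rw [hm₀']; linarith
    conv_rhs => rw [ha]
    rw [hper]
  case side =>
    intro b hb hne'
    rw [if_neg, zero_mul]
    rintro ⟨c, hc⟩
    have hd : (2*(r:ℤ)) ∣ ((b:ℤ) - (m₀:ℤ)) := by
      refine ⟨c + a/(2*(r:ℤ)), ?_⟩
      rw [hm₀']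
      linarith
    have hb' : (b:ℤ) < 2*(r:ℤ) := by
      have := Finset.mem_range.mp hb
      have : (b:ℤ) < ((2*r:ℕ):ℤ) := by exact_mod_cast this
      push_cast at this; omega
    have h0 : (b:ℤ) - (m₀:ℤ) = 0 := by
      refine Int.eq_zero_of_abs_lt_dvd hd ?_
      rw [abs_lt]
      constructor <;> omega
    exact absurd (by omega : b = m₀) hne'

lemma delta1 (r : ℕ) (hr : 2 ≤ r) (g : ℤ → ℂ) (hper : ∀ x y, g (x + 2*(r:ℤ)*y) = g x)
    {k : ℤ} (hk1 : 0 < k) (hk2 : k < r) (a : ℤ) :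
    ∑ m ∈ Finset.range (2*r), ((eps r k ((m:ℤ) - a) : ℤ):ℂ) * g m = g (k + a) - g (a - k) := by
  have hk := not_dvd_2k r hk1 hk2
  simp only [eps_split r hk, sub_mul]
  rw [Finset.sum_sub_distrib]
  simp only [show ∀ m:ℤ, m - a - k = m - (k+a) from fun m => by ring,
    show ∀ m:ℤ, m - a + k = m - (a-k) from fun m => by ring]
  rw [sum_delta r hr g hper (k+a), sum_delta r hr g hper (a-k)]

lemma delta2 (r : ℕ) (hr : 2 ≤ r) (g : ℤ → ℂ) (hper : ∀ x y, g (x + 2*(r:ℤ)*y) = g x)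
    (hdeg : ∀ m:ℤ, (2*(r:ℤ)) ∣ 2*m → g m = 0) (j : ℤ) :
    ∑ m ∈ Finset.range (2*r), ((eps r (m:ℤ) j : ℤ):ℂ) * g m = g j - g (-j) := by
  by_cases hj : (2*(r:ℤ)) ∣ 2*j
  · rw [hdeg j hj, hdeg (-j) (by simpa [show 2*(-j) = -(2*j) by ring] using hj.neg_right),
      sub_zero]
    refine Finset.sum_eq_zero fun m _ => ?_
    by_cases h1 : (2*(r:ℤ)) ∣ ((m:ℤ)-j)
    · rw [hdeg m (by
        have h2 : (2*(r:ℤ)) ∣ 2*((m:ℤ)-j) := h1.mul_left 2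
        simpa [show 2*j + 2*((m:ℤ)-j) = 2*(m:ℤ) by ring] using hj.add h2), mul_zero]
    · by_cases h2 : (2*(r:ℤ)) ∣ ((m:ℤ)+j)
      · rw [hdeg m (by
          have h3 : (2*(r:ℤ)) ∣ 2*((m:ℤ)+j) := h2.mul_left 2
          simpa [show 2*((m:ℤ)+j) - 2*j = 2*(m:ℤ) by ring] using h3.sub hj), mul_zero]
      · have : eps r (m:ℤ) j = 0 := by
          unfold eps
          rw [if_neg (by rw [show j - (m:ℤ) = -((m:ℤ)-j) by ring, dvd_neg]; exact h1),
            if_neg (by rw [show j + (m:ℤ) = (m:ℤ)+j by ring]; exact h2)]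
        rw [this]
        simp
  · simp only [eps_split2 r hj, sub_mul]
    rw [Finset.sum_sub_distrib]
    simp only [show ∀ m:ℤ, m + j = m - (-j) from fun m => by ring]
    rw [sum_delta r hr g hper j, sum_delta r hr g hper (-j)]

lemma half_sum (r : ℕ) (hr : 2 ≤ r) (g : ℤ → ℂ) (hper : ∀ x y, g (x + 2*(r:ℤ)*y) = g x)
    (heven : ∀ x, g (-x) = g x) (h0 : g 0 = 0) (hrr : g (r:ℤ) = 0) :
    ∑ m ∈ Finset.range (2*r), g (m:ℤ) = 2 * ∑ m ∈ Finset.range (r-1), g ((m:ℤ)+1) := by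
  have hsplit : 2*r = (r+1) + (r-1) := by omega
  rw [hsplit, Finset.sum_range_add]
  have e2 : ∀ i ∈ Finset.range (r-1), g (((r+1+i : ℕ)):ℤ) = (fun j : ℕ => g ((j:ℤ)+1)) ((r-1) - 1 - i) := by
    intro i hi
    have hi' : i < r - 1 := Finset.mem_range.mp hi
    have hc : (((r-1) - 1 - i : ℕ):ℤ) + 1 = (r:ℤ) - 1 - i := by
      have : ((r:ℤ)) - 2 - i = (((r-1) - 1 - i : ℕ):ℤ) := by push_cast [Nat.cast_sub] <;> omega
      omega
    show g _ = g _
    rw [hc]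
    have : (r:ℤ) - 1 - i = (-((r:ℤ)+1+i)) + 2*(r:ℤ)*1 := by ring
    rw [this, hper, heven]
    norm_cast
  rw [Finset.sum_congr rfl e2, Finset.sum_range_reflect (fun j : ℕ => g ((j:ℤ)+1)) (r-1)]
  have e1 : ∑ i ∈ Finset.range (r+1), g (i:ℤ) = ∑ i ∈ Finset.range (r-1), g ((i:ℤ)+1) := by
    rw [Finset.sum_range_succ' (fun i : ℕ => g (i:ℤ)) r]
    simp only [Nat.cast_zero, h0, add_zero]
    have : r = (r-1) + 1 := by omega
    rw [this, Finset.sum_range_succ]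
    rw [show (r-1)+1 = r from by omega, hrr, add_zero]
    refine Finset.sum_congr rfl fun x _ => ?_
    norm_cast
  rw [e1]
  push_cast
  ring

lemma eps_per1 (r : ℕ) (k j y : ℤ) : eps r (k + 2*(r:ℤ)*y) j = eps r k j := by
  unfold eps
  simp only [show j - (k + 2*(r:ℤ)*y) = (j-k) + (2*(r:ℤ))*(-y) by ring,
    show j + (k + 2*(r:ℤ)*y) = (j+k) + (2*(r:ℤ))*y by ring,
    dvd_add_left (⟨y, rfl⟩ : (2*(r:ℤ)) ∣ 2*(r:ℤ)*y),
    dvd_add_left (⟨-y, rfl⟩ : (2*(r:ℤ)) ∣ 2*(r:ℤ)*(-y))]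

lemma eps_neg_left (r : ℕ) {k : ℤ} (hk : ¬ (2*(r:ℤ)) ∣ 2*k) (j : ℤ) :
    eps r (-k) j = - eps r k j := by
  unfold eps
  simp only [show j - -k = j + k by ring, show j + -k = j - k by ring]
  by_cases h1 : (2*(r:ℤ)) ∣ (j-k) <;> by_cases h2 : (2*(r:ℤ)) ∣ (j+k) <;>
    simp [h1, h2]
  exact absurd (by simpa [show j+k - (j-k) = 2*k by ring] using h2.sub h1) hk

lemma key_sums (r : ℕ) (hr : 2 ≤ r) (p q K L : ℤ) (hK1 : 0 < K) (hK2 : K < r)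
    (hL1 : 0 < L) (hL2 : L < r) :
    ∑ m ∈ Finset.range (r-1), (fun x : ℤ => tconst r ^ (-(p*q)) *
        (tconst r ^ (2*q*x) * ((eps r K (x - p) : ℤ):ℂ) +
         tconst r ^ (-(2*q*x)) * ((eps r K (x + p) : ℤ):ℂ)) * sC r (x*L)) ((m:ℤ)+1)
  = ∑ m ∈ Finset.range (r-1), (fun x : ℤ => tconst r ^ (p*q) * sC r (K*x) *
        (tconst r ^ (2*p*L) * ((eps r x (L + q) : ℤ):ℂ) +
         tconst r ^ (-(2*p*L)) * ((eps r x (L - q) : ℤ):ℂ))) ((m:ℤ)+1) := by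
  have t0 := tne r
  have hKnd := not_dvd_2k r hK1 hK2
  set F : ℤ → ℂ := fun x => tconst r ^ (-(p*q)) *
        (tconst r ^ (2*q*x) * ((eps r K (x - p) : ℤ):ℂ) +
         tconst r ^ (-(2*q*x)) * ((eps r K (x + p) : ℤ):ℂ)) * sC r (x*L) with hF
  set G : ℤ → ℂ := fun x => tconst r ^ (p*q) * sC r (K*x) *
        (tconst r ^ (2*p*L) * ((eps r x (L + q) : ℤ):ℂ) +
         tconst r ^ (-(2*p*L)) * ((eps r x (L - q) : ℤ):ℂ)) with hG
  have hFper : ∀ x y, F (x + 2*(r:ℤ)*y) = F x := by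
    intro x y
    simp only [hF]
    rw [show -(2*q*(x+2*(r:ℤ)*y)) = -(2*q*x) + 4*(r:ℤ)*(-(q*y)) by ring, t_per r hr,
      show 2*q*(x+2*(r:ℤ)*y) = 2*q*x + 4*(r:ℤ)*(q*y) by ring, t_per r hr,
      show x+2*(r:ℤ)*y - p = (x - p) + 2*(r:ℤ)*y by ring, eps_per,
      show x+2*(r:ℤ)*y + p = (x + p) + 2*(r:ℤ)*y by ring, eps_per,
      show (x+2*(r:ℤ)*y)*L = x*L + 2*(r:ℤ)*(y*L) by ring, sC_per r hr]
  have hFeven : ∀ x, F (-x) = F x := by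
    intro x
    simp only [hF]
    rw [show (-x) - p = -(x+p) by ring, show (-x) + p = -(x - p) by ring,
      eps_neg_right r hKnd, eps_neg_right r hKnd,
      show (-x)*L = -(x*L) by ring, sC_neg,
      show 2*q*(-x) = -(2*q*x) by ring, neg_neg]
    push_cast
    ring
  have hF0 : F 0 = 0 := by
    simp only [hF]
    rw [show (0:ℤ)*L = 0 by ring, sC_zero, mul_zero]
  have hFr : F (r:ℤ) = 0 := by
    simp only [hF]
    rw [sC_dvd r hr ⟨L, rfl⟩, mul_zero]
  have hGper : ∀ x y, G (x + 2*(r:ℤ)*y) = G x := by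
    intro x y
    simp only [hG]
    rw [show K*(x+2*(r:ℤ)*y) = K*x + 2*(r:ℤ)*(K*y) by ring, sC_per r hr,
      eps_per1, eps_per1]
  have hGeven : ∀ x, G (-x) = G x := by
    intro x
    by_cases hx : (2*(r:ℤ)) ∣ 2*x
    · have hrx : (r:ℤ) ∣ x := by
        rcases hx with ⟨c, hc⟩; exact ⟨c, by linarith⟩
      simp only [hG]
      rw [sC_dvd r hr (hrx.mul_left K), sC_dvd r hr ((dvd_neg.mpr hrx).mul_left K)]
      simp
    · simp only [hG]
      rw [show K*(-x) = -(K*x) by ring, sC_neg, eps_neg_left r hx, eps_neg_left r hx]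
      push_cast
      ring
  have hG0 : G 0 = 0 := by
    simp only [hG]
    rw [show K*(0:ℤ) = 0 by ring, sC_zero]
    simp
  have hGr : G (r:ℤ) = 0 := by
    simp only [hG]
    rw [sC_dvd r hr (⟨K, by ring⟩ : (r:ℤ) ∣ K*(r:ℤ))]
    simp
  apply mul_left_cancel₀ (two_ne_zero : (2:ℂ) ≠ 0)
  rw [← half_sum r hr F hFper hFeven hF0 hFr, ← half_sum r hr G hGper hGeven hG0 hGr]
  -- auxiliary functions
  set g1 : ℤ → ℂ := fun x => tconst r ^ (2*q*x) * sC r (x*L) with hg1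
  set g2 : ℤ → ℂ := fun x => tconst r ^ (-(2*q*x)) * sC r (x*L) with hg2
  set h : ℤ → ℂ := fun x => sC r (K*x) with hh
  have hg1per : ∀ x y, g1 (x + 2*(r:ℤ)*y) = g1 x := by
    intro x y
    simp only [hg1]
    rw [show 2*q*(x+2*(r:ℤ)*y) = 2*q*x + 4*(r:ℤ)*(q*y) by ring, t_per r hr,
      show (x+2*(r:ℤ)*y)*L = x*L + 2*(r:ℤ)*(y*L) by ring, sC_per r hr]
  have hg2per : ∀ x y, g2 (x + 2*(r:ℤ)*y) = g2 x := by
    intro x y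
    simp only [hg2]
    rw [show -(2*q*(x+2*(r:ℤ)*y)) = -(2*q*x) + 4*(r:ℤ)*(-(q*y)) by ring, t_per r hr,
      show (x+2*(r:ℤ)*y)*L = x*L + 2*(r:ℤ)*(y*L) by ring, sC_per r hr]
  have hhper : ∀ x y, h (x + 2*(r:ℤ)*y) = h x := by
    intro x y
    simp only [hh]
    rw [show K*(x+2*(r:ℤ)*y) = K*x + 2*(r:ℤ)*(K*y) by ring, sC_per r hr]
  have hhdeg : ∀ m:ℤ, (2*(r:ℤ)) ∣ 2*m → h m = 0 := by
    intro m hm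
    rcases hm with ⟨c, hc⟩
    have hrm : (r:ℤ) ∣ m := ⟨c, by linarith⟩
    simp only [hh]
    exact sC_dvd r hr (hrm.mul_left K)
  have hFm : ∀ n : ℕ, F (n:ℤ) = tconst r ^ (-(p*q)) * (((eps r K ((n:ℤ) - p) : ℤ):ℂ) * g1 (n:ℤ))
      + tconst r ^ (-(p*q)) * (((eps r K ((n:ℤ) - (-p)) : ℤ):ℂ) * g2 (n:ℤ)) := by
    intro n
    simp only [hF, hg1, hg2]
    rw [show (n:ℤ) - -p = (n:ℤ) + p by ring]
    ring
  have hGm : ∀ n : ℕ, G (n:ℤ) = (tconst r ^ (p*q) * tconst r ^ (2*p*L)) * (((eps r (n:ℤ) (L+q) : ℤ):ℂ) * h (n:ℤ))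
      + (tconst r ^ (p*q) * tconst r ^ (-(2*p*L))) * (((eps r (n:ℤ) (L-q) : ℤ):ℂ) * h (n:ℤ)) := by
    intro n
    simp only [hG, hh]
    ring
  rw [Finset.sum_congr rfl (fun n _ => hFm n), Finset.sum_congr rfl (fun n _ => hGm n),
    Finset.sum_add_distrib, Finset.sum_add_distrib,
    ← Finset.mul_sum, ← Finset.mul_sum, ← Finset.mul_sum, ← Finset.mul_sum,
    delta1 r hr g1 hg1per hK1 hK2 p, delta1 r hr g2 hg2per hK1 hK2 (-p),
    delta2 r hr h hhper hhdeg (L+q), delta2 r hr h hhper hhdeg (L-q)]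
  simp only [hg1, hg2, hh, sC]
  simp only [mul_sub, sub_mul, mul_add, add_mul, neg_neg, ← zpow_add₀ t0]
  ring

lemma CS (r : ℕ) (hr : 2 ≤ r) (p q : ℤ) : Cmat r p q * Smat r = Smat r * Cmat r (-q) p := by
  ext k l
  rw [Matrix.mul_apply, Matrix.mul_apply]
  have hK1 : (0:ℤ) < (k:ℤ)+1 := by positivity
  have hK2 : (k:ℤ)+1 < (r:ℤ) := by
    have := k.isLt
    omega
  have hL1 : (0:ℤ) < (l:ℤ)+1 := by positivity
  have hL2 : (l:ℤ)+1 < (r:ℤ) := by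
    have := l.isLt
    omega
  have hs1 : sC r 1 ≠ 0 := sC_ne r hr (by
    intro hd
    have := Int.le_of_dvd one_pos hd
    omega)
  have hL : ∀ m : Fin (r-1), Cmat r p q k m * Smat r m l =
      (fun x : ℤ => tconst r ^ (-(p*q)) *
        (tconst r ^ (2*q*x) * ((eps r ((k:ℤ)+1) (x - p) : ℤ):ℂ) +
         tconst r ^ (-(2*q*x)) * ((eps r ((k:ℤ)+1) (x + p) : ℤ):ℂ)) * sC r (x*((l:ℤ)+1)))
        ((m:ℤ)+1) / sC r 1 := by
    intro m
    simp only [Cmat, Smat, Matrix.of_apply, qint_eq r hr]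
    ring
  have hR : ∀ m : Fin (r-1), Smat r k m * Cmat r (-q) p m l =
      (fun x : ℤ => tconst r ^ (p*q) * sC r (((k:ℤ)+1)*x) *
        (tconst r ^ (2*p*((l:ℤ)+1)) * ((eps r x (((l:ℤ)+1) + q) : ℤ):ℂ) +
         tconst r ^ (-(2*p*((l:ℤ)+1))) * ((eps r x (((l:ℤ)+1) - q) : ℤ):ℂ)))
        ((m:ℤ)+1) / sC r 1 := by
    intro m
    simp only [Cmat, Smat, Matrix.of_apply, qint_eq r hr]
    rw [show (-(-q*p) : ℤ) = p*q by ring,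
      show ((l:ℤ)+1) - -q = ((l:ℤ)+1) + q by ring,
      show ((l:ℤ)+1) + -q = ((l:ℤ)+1) - q by ring]
    ring
  rw [Finset.sum_congr rfl (fun m _ => hL m), Finset.sum_congr rfl (fun m _ => hR m),
    ← Finset.sum_div, ← Finset.sum_div]
  congr 1
  rw [Fin.sum_univ_eq_sum_range (fun n : ℕ => (fun x : ℤ => tconst r ^ (-(p*q)) *
        (tconst r ^ (2*q*x) * ((eps r ((k:ℤ)+1) (x - p) : ℤ):ℂ) +
         tconst r ^ (-(2*q*x)) * ((eps r ((k:ℤ)+1) (x + p) : ℤ):ℂ)) * sC r (x*((l:ℤ)+1)))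
        ((n:ℤ)+1)) (r-1),
    Fin.sum_univ_eq_sum_range (fun n : ℕ => (fun x : ℤ => tconst r ^ (p*q) * sC r (((k:ℤ)+1)*x) *
        (tconst r ^ (2*p*((l:ℤ)+1)) * ((eps r x (((l:ℤ)+1) + q) : ℤ):ℂ) +
         tconst r ^ (-(2*p*((l:ℤ)+1))) * ((eps r x (((l:ℤ)+1) - q) : ℤ):ℂ)))
        ((n:ℤ)+1)) (r-1)]
  exact key_sums r hr p q ((k:ℤ)+1) ((l:ℤ)+1) hK1 hK2 hL1 hL2

noncomputable def dd (r : ℕ) (M : ℤ) : ℂ := tconst r ^ (2*M) + tconst r ^ (-(2*M))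

lemma sC_rec (r : ℕ) (x y : ℤ) : sC r (x + y) + sC r (x - y) = dd r y * sC r x := by
  simp only [sC, dd]
  simp only [mul_sub, sub_mul, mul_add, add_mul, ← zpow_add₀ (tne r)]
  ring

lemma rec_solve (d c : ℂ) (v w : ℕ → ℂ) (hv0 : v 0 = 0) (hw0 : w 0 = 0) (hc : v 1 = c * w 1)
    (N : ℕ) (hv : ∀ n, 1 ≤ n → n + 1 ≤ N → v (n+1) + v (n-1) = d * v n)
    (hw : ∀ n, 1 ≤ n → w (n+1) + w (n-1) = d * w n) :
    ∀ n, n ≤ N → v n = c * w n := by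
  intro n
  induction n using Nat.strong_induction_on with
  | _ n ih =>
    intro hn
    match n, hn with
    | 0, _ => rw [hv0, hw0, mul_zero]
    | 1, _ => exact hc
    | (m+2), hn =>
      have h1 : v (m+2) + v m = d * v (m+1) := by simpa using hv (m+1) (by omega) (by omega)
      have h2 : w (m+2) + w m = d * w (m+1) := by simpa using hw (m+1) (by omega)
      have e1 := ih (m+1) (by omega) (by omega)
      have e2 := ih m (by omega) (by omega)
      linear_combination h1 - c*h2 + d*e1 - e2

lemma eps_small (r : ℕ) (hr : 2 ≤ r) {K J : ℤ} (hK1 : 1 ≤ K) (hK2 : K ≤ (r:ℤ)-1)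
    (hJ1 : 0 ≤ J) (hJ2 : J ≤ (r:ℤ)) : eps r K J = if J = K then 1 else 0 := by
  unfold eps
  by_cases h1 : (2*(r:ℤ)) ∣ (J - K)
  · have h0 : J - K = 0 := Int.eq_zero_of_abs_lt_dvd h1 (abs_lt.mpr ⟨by omega, by omega⟩)
    rw [if_pos h1, if_pos (by omega)]
  · rw [if_neg h1, if_neg ?_, if_neg (fun hEq => h1 ⟨0, by omega⟩)]
    intro h2
    have h0 : J + K = 0 := Int.eq_zero_of_abs_lt_dvd h2 (abs_lt.mpr ⟨by omega, by omega⟩)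
    omega

noncomputable def ext2 (r : ℕ) (A : Matrix (Fin (r-1)) (Fin (r-1)) ℂ) (K M : ℤ) : ℂ :=
  if h : 1 ≤ K ∧ K ≤ (r:ℤ)-1 ∧ 1 ≤ M ∧ M ≤ (r:ℤ)-1 then
    A ⟨(K-1).toNat, by omega⟩ ⟨(M-1).toNat, by omega⟩ else 0

lemma ext2_eq (r : ℕ) (A : Matrix (Fin (r-1)) (Fin (r-1)) ℂ) {K M : ℤ}
    (h1 : 1 ≤ K) (h2 : K ≤ (r:ℤ)-1) (h3 : 1 ≤ M) (h4 : M ≤ (r:ℤ)-1)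
    (i j : Fin (r-1)) (hi : (i:ℤ) = K-1) (hj : (j:ℤ) = M-1) : ext2 r A K M = A i j := by
  rw [ext2, dif_pos ⟨h1,h2,h3,h4⟩]
  have e1 : (⟨(K-1).toNat, by omega⟩ : Fin (r-1)) = i := Fin.ext (by simp only [Fin.val_mk]; omega)
  have e2 : (⟨(M-1).toNat, by omega⟩ : Fin (r-1)) = j := Fin.ext (by simp only [Fin.val_mk]; omega)
  rw [e1, e2]

lemma rowsum (r : ℕ) (A : Matrix (Fin (r-1)) (Fin (r-1)) ℂ) (J : ℤ) (m : Fin (r-1)) :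
    ∑ i : Fin (r-1), (if ((i:ℤ)+1 = J) then (1:ℂ) else 0) * A i m = ext2 r A J ((m:ℤ)+1) := by
  have hm := m.isLt
  by_cases hJ : 1 ≤ J ∧ J ≤ (r:ℤ)-1
  · obtain ⟨hJ1, hJ2⟩ := hJ
    have hJ' : (J-1).toNat < r - 1 := by omega
    set i₀ : Fin (r-1) := ⟨(J-1).toNat, hJ'⟩ with hi₀
    have hi₀z : (i₀:ℤ) = J - 1 := by simp only [hi₀, Fin.val_mk]; omega
    rw [Finset.sum_eq_single i₀]
    · rw [if_pos (by omega : (i₀:ℤ) + 1 = J), one_mul]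
      exact (ext2_eq r A hJ1 hJ2 (by omega) (by omega) i₀ m hi₀z (by ring)).symm
    · intro b _ hb
      rw [if_neg, zero_mul]
      intro hEq
      exact hb (Fin.ext (by omega))
    · intro h
      exact absurd (Finset.mem_univ _) h
  · rw [ext2, dif_neg (fun h => hJ ⟨h.1, h.2.1⟩)]
    apply Finset.sum_eq_zero
    intro i _
    have hi := i.isLt
    rw [if_neg, zero_mul]
    intro hEq
    exact hJ (by omega)

lemma colsum (r : ℕ) (A : Matrix (Fin (r-1)) (Fin (r-1)) ℂ) (J : ℤ) (k : Fin (r-1)) :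
    ∑ i : Fin (r-1), A k i * (if ((i:ℤ)+1 = J) then (1:ℂ) else 0) = ext2 r A ((k:ℤ)+1) J := by
  have hsum : ∑ i : Fin (r-1), A k i * (if ((i:ℤ)+1 = J) then (1:ℂ) else 0)
      = ∑ i : Fin (r-1), (if ((i:ℤ)+1 = J) then (1:ℂ) else 0) * (Aᵀ) i k := by
    refine Finset.sum_congr rfl fun i _ => ?_
    rw [Matrix.transpose_apply, mul_comm]
  rw [hsum, rowsum r Aᵀ J k]
  simp only [ext2]
  have hk := k.isLt
  by_cases hJ : 1 ≤ J ∧ J ≤ (r:ℤ)-1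
  · rw [dif_pos ⟨hJ.1, hJ.2, by omega, by omega⟩, dif_pos ⟨by omega, by omega, hJ.1, hJ.2⟩,
      Matrix.transpose_apply]
  · rw [dif_neg (fun h => hJ ⟨h.1, h.2.1⟩), dif_neg (fun h => hJ ⟨h.2.2.1, h.2.2.2⟩)]

lemma CmatNeg (r : ℕ) : Cmat r (-1) 0 = Cmat r 1 0 := by
  ext k m
  simp only [Cmat, Matrix.of_apply]
  rw [show (-(-1*0):ℤ) = -(1*0) by ring,
    show ((m:ℤ)+1) - -1 = ((m:ℤ)+1) + 1 by ring,
    show ((m:ℤ)+1) + -1 = ((m:ℤ)+1) - 1 by ring]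
  ring

lemma Cmat10 (r : ℕ) (hr : 2 ≤ r) (k i : Fin (r-1)) :
    Cmat r 1 0 k i = (if ((i:ℤ)+1 = ((k:ℤ)+1)+1) then (1:ℂ) else 0)
      + (if ((i:ℤ)+1 = ((k:ℤ)+1)-1) then (1:ℂ) else 0) := by
  have hk := k.isLt
  have hi := i.isLt
  simp only [Cmat, Matrix.of_apply]
  rw [show (-(2*0*((i:ℤ)+1)) : ℤ) = 0 by ring, show ((2*0*((i:ℤ)+1)) : ℤ) = 0 by ring,
    show (-(1*0) : ℤ) = 0 by ring, zpow_zero, one_mul, one_mul, one_mul,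
    eps_small r hr (by omega) (by omega) (by omega) (by omega),
    eps_small r hr (by omega) (by omega) (by omega) (by omega)]
  simp only [show (((i:ℤ)+1-1 = (k:ℤ)+1)) ↔ (((i:ℤ)+1 = ((k:ℤ)+1)+1)) from by omega,
    show (((i:ℤ)+1+1 = (k:ℤ)+1)) ↔ (((i:ℤ)+1 = ((k:ℤ)+1)-1)) from by omega,
    apply_ite (fun z : ℤ => (z:ℂ)), Int.cast_one, Int.cast_zero]

lemma Cmat01 (r : ℕ) (hr : 2 ≤ r) (k i : Fin (r-1)) :
    Cmat r 0 1 k i = if ((i:ℤ) = (k:ℤ)) then dd r ((i:ℤ)+1) else 0 := by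
  have hk := k.isLt
  have hi := i.isLt
  simp only [Cmat, Matrix.of_apply, dd]
  rw [show (-(0*1) : ℤ) = 0 by ring, zpow_zero, one_mul,
    show ((i:ℤ)+1) - 0 = (i:ℤ)+1 by ring, show ((i:ℤ)+1) + 0 = (i:ℤ)+1 by ring,
    show (2*1*((i:ℤ)+1) : ℤ) = 2*((i:ℤ)+1) by ring,
    eps_small r hr (by omega) (by omega) (by omega) (by omega)]
  simp only [show (((i:ℤ)+1 = (k:ℤ)+1)) ↔ (((i:ℤ) = (k:ℤ))) from by omega,
    apply_ite (fun z : ℤ => (z:ℂ)), Int.cast_one, Int.cast_zero]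
  split_ifs with h
  · ring
  · ring

lemma eq1' (r : ℕ) (hr : 2 ≤ r) (A : Matrix (Fin (r-1)) (Fin (r-1)) ℂ)
    (hA : Cmat r 1 0 * A = A * Cmat r 0 1) (K M : ℤ)
    (hK1 : 1 ≤ K) (hK2 : K ≤ (r:ℤ)-1) (hM1 : 1 ≤ M) (hM2 : M ≤ (r:ℤ)-1) :
    ext2 r A (K+1) M + ext2 r A (K-1) M = dd r M * ext2 r A K M := by
  have hk' : (K-1).toNat < r - 1 := by omega
  have hm' : (M-1).toNat < r - 1 := by omega
  set k : Fin (r-1) := ⟨(K-1).toNat, hk'⟩ with hkdef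
  set m : Fin (r-1) := ⟨(M-1).toNat, hm'⟩ with hmdef
  have hkz : (k:ℤ) = K - 1 := by simp only [hkdef, Fin.val_mk]; omega
  have hmz : (m:ℤ) = M - 1 := by simp only [hmdef, Fin.val_mk]; omega
  have h := congrFun (congrFun hA k) m
  rw [Matrix.mul_apply, Matrix.mul_apply] at h
  rw [Finset.sum_congr rfl (fun i _ => by rw [Cmat10 r hr k i, add_mul]),
    Finset.sum_add_distrib, rowsum r A _ m, rowsum r A _ m] at h
  rw [Finset.sum_congr rfl (fun i _ => by rw [Cmat01 r hr i m]),
    Finset.sum_eq_single m] at h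
  · rw [if_pos rfl] at h
    rw [hkz, hmz] at h
    rw [show K-1+1+1 = K+1 by ring, show K-1+1-1 = K-1 by ring, show M-1+1 = M by ring] at h
    rw [h, ← ext2_eq r A hK1 hK2 hM1 hM2 k m hkz hmz]
    ring
  · intro b _ hb
    rw [if_neg (fun hEq => hb (Fin.ext (by omega))), mul_zero]
  · intro hc
    exact absurd (Finset.mem_univ _) hc

lemma eq2' (r : ℕ) (hr : 2 ≤ r) (A : Matrix (Fin (r-1)) (Fin (r-1)) ℂ)
    (hA : Cmat r 0 1 * A = A * Cmat r 1 0) (K M : ℤ)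
    (hK1 : 1 ≤ K) (hK2 : K ≤ (r:ℤ)-1) (hM1 : 1 ≤ M) (hM2 : M ≤ (r:ℤ)-1) :
    ext2 r A K (M+1) + ext2 r A K (M-1) = dd r K * ext2 r A K M := by
  have hk' : (K-1).toNat < r - 1 := by omega
  have hm' : (M-1).toNat < r - 1 := by omega
  set k : Fin (r-1) := ⟨(K-1).toNat, hk'⟩ with hkdef
  set m : Fin (r-1) := ⟨(M-1).toNat, hm'⟩ with hmdef
  have hkz : (k:ℤ) = K - 1 := by simp only [hkdef, Fin.val_mk]; omega
  have hmz : (m:ℤ) = M - 1 := by simp only [hmdef, Fin.val_mk]; omega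
  have h := congrFun (congrFun hA k) m
  rw [Matrix.mul_apply, Matrix.mul_apply] at h
  rw [Finset.sum_congr rfl (fun i _ => by rw [Cmat01 r hr k i]),
    Finset.sum_eq_single k] at h
  · rw [Finset.sum_congr rfl (fun i _ => by rw [Cmat10 r hr i m, mul_add]),
      Finset.sum_add_distrib] at h
    simp only [show ∀ a : ℤ, (((m:ℤ)+1 = a+1+1)) ↔ ((a+1 = ((m:ℤ)+1)-1)) from fun a => by omega,
      show ∀ a : ℤ, (((m:ℤ)+1 = a+1-1)) ↔ ((a+1 = ((m:ℤ)+1)+1)) from fun a => by omega] at h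
    rw [colsum r A _ k, colsum r A _ k] at h
    have hkz' : (((K-1).toNat : ℕ) : ℤ) = K - 1 := by omega
    have hmz' : (((M-1).toNat : ℕ) : ℤ) = M - 1 := by omega
    simp only [if_true, hkz, hmz, hkz', hmz'] at h
    simp only [show K-1+1 = K by ring, show M-1+1-1 = M-1 by ring,
      show M-1+1+1 = M+1 by ring] at h
    rw [ext2_eq r A hK1 hK2 hM1 hM2 k m hkz hmz]
    linear_combination -h
  · intro b _ hb
    rw [if_neg (fun hEq => hb (Fin.ext (by omega))), zero_mul]
  · intro hc
    exact absurd (Finset.mem_univ _) hc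


/-- A complex `(r−1)×(r−1)` matrix `A` satisfies `C(p,q)·A = A·C(−q,p)` for all integers `p, q`
if and only if `A` is a scalar multiple of the matrix `S = ([jk])_{1≤j,k≤r−1}`. -/
theorem weyl_S_matrix_unique (r : ℕ) (hr : 2 ≤ r)
    (A : Matrix (Fin (r - 1)) (Fin (r - 1)) ℂ) :
    (∀ p q : ℤ, Cmat r p q * A = A * Cmat r (-q) p) ↔ ∃ c : ℂ, A = c • Smat r := by
  constructor
  · intro hAc
    have h1 := hAc 1 0
    have h2 := hAc 0 1
    rw [CmatNeg r] at h2
    have hs1 : sC r 1 ≠ 0 := sC_ne r hr (fun hd => by have := Int.le_of_dvd one_pos hd; omega)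
    have main1 : ∀ K M : ℤ, 1 ≤ K → K ≤ (r:ℤ)-1 → 1 ≤ M → M ≤ (r:ℤ)-1 →
        ext2 r A K M = (ext2 r A 1 M / sC r M) * sC r (K*M) := by
      intro K M hK1 hK2 hM1 hM2
      have hMne : sC r M ≠ 0 := sC_ne r hr (fun hd => by
        have := Int.le_of_dvd (by omega) hd; omega)
      have hres := rec_solve (dd r M) (ext2 r A 1 M / sC r M)
        (fun n => ext2 r A (n:ℤ) M) (fun n => sC r ((n:ℤ)*M))
        (by simp only [Nat.cast_zero]
            rw [ext2, dif_neg]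
            rintro ⟨hcon, -⟩
            omega)
        (by simp only [Nat.cast_zero, zero_mul]
            exact sC_zero r)
        (by simp only [Nat.cast_one, one_mul]
            rw [div_mul_cancel₀ _ hMne])
        (r-1)
        (fun n h1n h2n => by
          have e := eq1' r hr A h1 (n:ℤ) M (by omega) (by omega) hM1 hM2
          push_cast [Nat.cast_sub h1n]
          exact e)
        (fun n h1n => by
          push_cast [Nat.cast_sub h1n]
          rw [show ((n:ℤ)+1)*M = (n:ℤ)*M + M by ring, show ((n:ℤ)-1)*M = (n:ℤ)*M - M by ring]
          exact sC_rec r ((n:ℤ)*M) M)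
        K.toNat (by omega)
      rw [Int.toNat_of_nonneg (by omega : (0:ℤ) ≤ K)] at hres
      exact hres
    have main2 : ∀ M : ℤ, 1 ≤ M → M ≤ (r:ℤ)-1 →
        ext2 r A 1 M = (ext2 r A 1 1 / sC r 1) * sC r M := by
      intro M hM1 hM2
      have hres := rec_solve (dd r 1) (ext2 r A 1 1 / sC r 1)
        (fun n => ext2 r A 1 (n:ℤ)) (fun n => sC r (n:ℤ))
        (by simp only [Nat.cast_zero]
            rw [ext2, dif_neg]
            rintro ⟨-, -, hcon, -⟩
            omega)
        (by simp only [Nat.cast_zero]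
            exact sC_zero r)
        (by simp only [Nat.cast_one]
            rw [div_mul_cancel₀ _ hs1])
        (r-1)
        (fun n h1n h2n => by
          have e := eq2' r hr A h2 1 (n:ℤ) (by omega) (by omega) (by omega) (by omega)
          push_cast [Nat.cast_sub h1n]
          exact e)
        (fun n h1n => by
          push_cast [Nat.cast_sub h1n]
          have := sC_rec r (n:ℤ) 1
          rw [show (n:ℤ)+1 = (n:ℤ)+1 by ring] at this
          exact this)
        M.toNat (by omega)
      rw [Int.toNat_of_nonneg (by omega : (0:ℤ) ≤ M)] at hres
      exact hres
    refine ⟨ext2 r A 1 1, ?_⟩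
    ext k m
    have hk := k.isLt
    have hm := m.isLt
    have hMne : sC r ((m:ℤ)+1) ≠ 0 := sC_ne r hr (fun hd => by
      have := Int.le_of_dvd (by omega) hd; omega)
    have e1 := main1 ((k:ℤ)+1) ((m:ℤ)+1) (by omega) (by omega) (by omega) (by omega)
    have e2 := main2 ((m:ℤ)+1) (by omega) (by omega)
    have hAkm : A k m = ext2 r A ((k:ℤ)+1) ((m:ℤ)+1) :=
      (ext2_eq r A (by omega) (by omega) (by omega) (by omega) k m (by ring) (by ring)).symm
    rw [Matrix.smul_apply, Smat, Matrix.of_apply, qint_eq r hr, smul_eq_mul, hAkm, e1, e2]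
    field_simp
  · rintro ⟨c, rfl⟩
    intro p q
    rw [Matrix.mul_smul, Matrix.smul_mul, CS r hr p q]
end

section
/- Let r ≥ 2 be an integer. The (r−1)² matrices C(0,q) for 0 ≤ q ≤ r−2, together with C(p,q) for 1 ≤ p ≤ r−2 and −r+p+2 ≤ q ≤ r−p−1, form a basis of the complex vector space of all (r−1)×(r−1) complex matrices. -/
open Complex Matrix

/-- The index set of the claimed basis: pairs `(p,q)` with `p = 0, 0 ≤ q ≤ r−2`, or
`1 ≤ p ≤ r−2, −r+p+2 ≤ q ≤ r−p−1`. -/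
def BasisIdx (r : ℕ) : Type :=
  { pq : ℤ × ℤ // (pq.1 = 0 ∧ 0 ≤ pq.2 ∧ pq.2 ≤ (r : ℤ) - 2) ∨
      (1 ≤ pq.1 ∧ pq.1 ≤ (r : ℤ) - 2 ∧ -(r : ℤ) + pq.1 + 2 ≤ pq.2 ∧ pq.2 ≤ (r : ℤ) - pq.1 - 1) }


set_option linter.unusedVariables false
set_option linter.unusedSectionVars false

namespace CmatAux

open Polynomial

def Pred (r : ℕ) (pq : ℤ × ℤ) : Prop :=
  (pq.1 = 0 ∧ 0 ≤ pq.2 ∧ pq.2 ≤ (r : ℤ) - 2) ∨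
  (1 ≤ pq.1 ∧ pq.1 ≤ (r : ℤ) - 2 ∧ -(r : ℤ) + pq.1 + 2 ≤ pq.2 ∧ pq.2 ≤ (r : ℤ) - pq.1 - 1)

noncomputable def ent (r : ℕ) (p q k m : ℤ) : ℂ :=
  tconst r ^ (-(p * q)) *
    (tconst r ^ (2 * q * m) * (eps r k (m - p) : ℂ) +
     tconst r ^ (-(2 * q * m)) * (eps r k (m + p) : ℂ))

noncomputable def pBox (r : ℕ) : Finset ℤ := Finset.Icc 0 ((r:ℤ)-2)
noncomputable def qBox (r : ℕ) : Finset ℤ := Finset.Icc (-(r:ℤ)+2) ((r:ℤ)-2)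
noncomputable def GBox (r : ℕ) : Finset (ℤ×ℤ) := pBox r ×ˢ qBox r

lemma t_ne (r : ℕ) : tconst r ≠ 0 := Complex.exp_ne_zero _

lemma t_zpow (r : ℕ) (a : ℤ) :
    tconst r ^ a = Complex.exp (a * (Real.pi * Complex.I / (2 * r))) := by
  rw [tconst, ← Complex.exp_int_mul]

lemma t_pow_eq_iff (r : ℕ) (hr : 0 < r) (a b : ℤ) :
    tconst r ^ a = tconst r ^ b ↔ (4 * (r : ℤ)) ∣ (a - b) := by
  have hπ : (Real.pi : ℂ) ≠ 0 := by simpa using Real.pi_ne_zero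
  have hI : Complex.I ≠ 0 := Complex.I_ne_zero
  have hr' : ((r : ℂ)) ≠ 0 := Nat.cast_ne_zero.mpr hr.ne'
  have hπI : (Real.pi : ℂ) * Complex.I ≠ 0 := mul_ne_zero hπ hI
  rw [t_zpow, t_zpow, Complex.exp_eq_exp_iff_exists_int]
  constructor
  · rintro ⟨n, hn⟩
    refine ⟨n, ?_⟩
    field_simp at hn
    have h2 : (a : ℂ) * (Real.pi * Complex.I) = ((b : ℂ) + 4 * r * n) * (Real.pi * Complex.I) := by
      linear_combination (↑Real.pi * Complex.I) * hn
    have h3 := mul_right_cancel₀ hπI h2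
    have key : ((a - b : ℤ) : ℂ) = ((4 * (r : ℤ) * n : ℤ) : ℂ) := by push_cast; linear_combination h3
    exact_mod_cast key
  · rintro ⟨n, hn⟩
    refine ⟨n, ?_⟩
    have h3 : ((a : ℂ)) = (b : ℂ) + 4 * r * n := by
      exact_mod_cast (by linarith [hn] : a = b + 4 * r * n)
    rw [h3]
    field_simp
    ring

lemma not_dvd {N x : ℤ} (hN : 0 < N) (h0 : x ≠ 0) (h1 : -N < x) (h2 : x < N) : ¬ N ∣ x := by
  rintro ⟨c, rfl⟩
  have hc1 : c < 1 := lt_of_mul_lt_mul_left (by linarith) hN.le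
  have hc2 : -1 < c := lt_of_mul_lt_mul_left (by linarith : N * (-1) < N * c) hN.le
  have hc : c = 0 := by omega
  subst hc
  simp at h0

theorem not_dvd2 {N x : ℤ} (hN : 0 < N) (h0 : x ≠ 0) (h0' : x ≠ N) (h1 : -N < x)
    (h2 : x < 2*N) : ¬ N ∣ x := by
  rintro ⟨c, rfl⟩
  have hc1 : c < 2 := lt_of_mul_lt_mul_left (by linarith) hN.le
  have hc2 : -1 < c := lt_of_mul_lt_mul_left (by linarith : N * (-1) < N * c) hN.le
  interval_cases c
  · simp at h0
  · simp at h0'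

lemma dickson_facts : ∀ n : ℕ, (Polynomial.dickson 1 (1:ℂ) n).natDegree ≤ n ∧
    (Polynomial.dickson 1 (1:ℂ) n).coeff n = (if n = 0 then 2 else 1) := by
  intro n
  induction n using Nat.strong_induction_on with
  | _ n IH =>
    rcases n with _ | _ | m
    · rw [Polynomial.dickson_zero]
      norm_num
    · rw [Polynomial.dickson_one]
      simp
    · have IH1 := IH (m+1) (by omega)
      have IH0 := IH m (by omega)
      rw [Polynomial.dickson_add_two]
      constructor
      · refine le_trans (Polynomial.natDegree_sub_le _ _) (max_le ?_ ?_)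
        · refine le_trans (Polynomial.natDegree_mul_le) ?_
          rw [Polynomial.natDegree_X]
          omega
        · refine le_trans (Polynomial.natDegree_mul_le) ?_
          have : (Polynomial.C (1:ℂ)).natDegree = 0 := Polynomial.natDegree_C 1
          omega
      · rw [Polynomial.coeff_sub, Polynomial.coeff_X_mul, Polynomial.C_1, one_mul]
        rw [Polynomial.coeff_eq_zero_of_natDegree_lt (by omega : (Polynomial.dickson 1 (1:ℂ) m).natDegree < m + 2)]
        have h1 := IH1.2
        rw [if_neg (by omega)] at h1
        rw [h1]
        norm_num

lemma downward (P : ℤ → Prop) (B : ℤ) (base : ∀ j, B < j → P j)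
    (step : ∀ j, j ≤ B → (∀ j', j < j' → P j') → P j) : ∀ j, P j := by
  have H : ∀ m : ℕ, ∀ j : ℤ, B - m ≤ j → P j := by
    intro m
    induction m with
    | zero =>
      intro j hj
      rcases lt_or_ge B j with h | h
      · exact base j h
      · have hjB : j = B := by omega
        subst hjB
        exact step j le_rfl (fun j' hj' => base j' hj')
    | succ m ih =>
      intro j hj
      rcases le_or_gt (B - m) j with h | h
      · exact ih j h
      · exact step j (by omega) (fun j' hj' => ih j' (by omega))
  intro j
  rcases lt_or_ge B j with h | h
  · exact base j h
  · exact H (B - j).toNat j (by omega)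


section Main

variable {r : ℕ} (hr : 2 ≤ r)

lemma hrz (hr : 2 ≤ r) : (2 : ℤ) ≤ (r : ℤ) := by exact_mod_cast hr

include hr

omit hr in
lemma ent_zero (p q k m : ℤ) (h1 : ¬ (2*(r:ℤ)) ∣ (m - p - k)) (h2 : ¬ (2*(r:ℤ)) ∣ (m - p + k))
    (h3 : ¬ (2*(r:ℤ)) ∣ (m + p - k)) (h4 : ¬ (2*(r:ℤ)) ∣ (m + p + k)) :
    ent r p q k m = 0 := by
  rw [ent, eps, eps, if_neg h1, if_neg h2, if_neg h3, if_neg h4]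
  push_cast; ring

lemma ent_zero' (p q k m : ℤ) (hp : 0 ≤ p) (hp2 : p ≤ (r:ℤ)-2) (hk : 1 ≤ k) (hk2 : k ≤ (r:ℤ)-1)
    (hm : 1 ≤ m) (hm2 : m ≤ (r:ℤ)-1)
    (h1 : m - p - k ≠ 0) (h1b : m - p + k ≠ 0) (h2 : m + p - k ≠ 0)
    (h3 : m + p + k ≠ 2*(r:ℤ)) :
    ent r p q k m = 0 := by
  have h := hrz hr
  refine ent_zero p q k m (not_dvd (by omega) h1 (by omega) (by omega))
    (not_dvd (by omega) h1b (by omega) (by omega))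
    (not_dvd (by omega) h2 (by omega) (by omega)) ?_
  exact not_dvd2 (by omega) (by omega) h3 (by omega) (by omega)

lemma ent_diag (p q k : ℤ) (hp1 : 1 ≤ p) (hp2 : p ≤ (r:ℤ)-2) (hk1 : 1 ≤ k)
    (hk2 : k + p ≤ (r:ℤ)-1) :
    ent r p q k (k + p) = tconst r ^ (q * (p + 2*k)) := by
  have h := hrz hr
  rw [ent, eps, eps]
  rw [if_pos (by rw [show k + p - p - k = 0 from by ring]; exact dvd_zero _ : (2*(r:ℤ)) ∣ (k + p - p - k))]
  rw [if_neg (not_dvd (by omega) (by omega) (by omega) (by omega) : ¬ (2*(r:ℤ)) ∣ (k + p + p - k)),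
      if_neg (not_dvd (by omega) (by omega) (by omega) (by omega) : ¬ (2*(r:ℤ)) ∣ (k + p + p + k))]
  push_cast
  rw [mul_zero, add_zero, mul_one, ← zpow_add₀ (t_ne r)]
  congr 1; ring

lemma ent_col (p q j : ℤ) (hp1 : 1 ≤ p) (hp2 : p ≤ (r:ℤ)-2) (hj1 : 1 ≤ j)
    (hj2 : j + p ≤ (r:ℤ)-1) :
    ent r p q (j + p) j = tconst r ^ (-(q * (p + 2*j))) := by
  have h := hrz hr
  rw [ent, eps, eps]
  rw [if_neg (not_dvd (by omega) (by omega) (by omega) (by omega) : ¬ (2*(r:ℤ)) ∣ (j - p - (j+p))),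
      if_neg (not_dvd (by omega) (by omega) (by omega) (by omega) : ¬ (2*(r:ℤ)) ∣ (j - p + (j+p)))]
  rw [if_pos (by rw [show j + p - (j + p) = 0 from by ring]; exact dvd_zero _ : (2*(r:ℤ)) ∣ (j + p - (j + p)))]
  push_cast
  rw [mul_zero, zero_add, mul_one, ← zpow_add₀ (t_ne r)]
  congr 1; ring

lemma ent_diag0 (q k : ℤ) (hk1 : 1 ≤ k) (hk2 : k ≤ (r:ℤ)-1) :
    ent r 0 q k k = tconst r ^ (2*q*k) + tconst r ^ (-(2*q*k)) := by
  rw [ent, eps, eps]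
  rw [if_pos (by rw [show k - 0 - k = 0 from by ring]; exact dvd_zero _ : (2*(r:ℤ)) ∣ (k - 0 - k)),
      if_pos (by rw [show k + 0 - k = 0 from by ring]; exact dvd_zero _ : (2*(r:ℤ)) ∣ (k + 0 - k))]
  push_cast
  rw [mul_one, mul_one]
  have : -((0:ℤ) * q) = 0 := by ring
  rw [this, zpow_zero, one_mul]


variable (c : ℤ × ℤ → ℂ)

  (hsum : ∀ k m : ℤ, 1 ≤ k → k ≤ (r:ℤ)-1 → 1 ≤ m → m ≤ (r:ℤ)-1 →
     ∑ x ∈ GBox r, c x * ent r x.1 x.2 k m = 0)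

include hr hsum

lemma row_sum (p : ℤ) (hp1 : 1 ≤ p) (hp2 : p ≤ (r:ℤ)-2)
    (IH : ∀ x : ℤ×ℤ, p < x.1 → c x = 0)
    (k : ℤ) (hk1 : 1 ≤ k) (hk2 : k + p ≤ (r:ℤ)-1) :
    ∑ q ∈ qBox r, c (p, q) * tconst r ^ (q*(p+2*k)) = 0 := by
  have hrz : (2:ℤ) ≤ (r:ℤ) := by exact_mod_cast hr
  have h := hsum k (k+p) hk1 (by omega) (by omega) hk2
  rw [GBox, Finset.sum_product] at h
  have hz : ∀ b ∈ pBox r, b ≠ p → (∑ q ∈ qBox r, c (b,q) * ent r b q k (k+p)) = 0 := by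
    intro b hb hbne
    rw [pBox, Finset.mem_Icc] at hb
    apply Finset.sum_eq_zero
    intro q _
    rcases lt_or_gt_of_ne hbne with hlt | hgt
    · rw [ent_zero' hr b q k (k+p) hb.1 hb.2 hk1 (by omega) (by omega) hk2
        (by omega) (by omega) (by omega) (by omega), mul_zero]
    · rw [IH (b,q) hgt, zero_mul]
  rw [Finset.sum_eq_single_of_mem p (by rw [pBox, Finset.mem_Icc]; omega) hz] at h
  rw [← h]
  apply Finset.sum_congr rfl
  intro q _
  rw [ent_diag hr p q k hp1 hp2 hk1 hk2]

lemma col_sum (p : ℤ) (hp1 : 1 ≤ p) (hp2 : p ≤ (r:ℤ)-2)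
    (IH : ∀ x : ℤ×ℤ, p < x.1 → c x = 0)
    (j : ℤ) (hj1 : 1 ≤ j) (hj2 : j + p ≤ (r:ℤ)-1) :
    ∑ q ∈ qBox r, c (p, q) * tconst r ^ (-(q*(p+2*j))) = 0 := by
  have hrz : (2:ℤ) ≤ (r:ℤ) := by exact_mod_cast hr
  have h := hsum (j+p) j (by omega) hj2 hj1 (by omega)
  rw [GBox, Finset.sum_product] at h
  have hz : ∀ b ∈ pBox r, b ≠ p → (∑ q ∈ qBox r, c (b,q) * ent r b q (j+p) j) = 0 := by
    intro b hb hbne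
    rw [pBox, Finset.mem_Icc] at hb
    apply Finset.sum_eq_zero
    intro q _
    rcases lt_or_gt_of_ne hbne with hlt | hgt
    · rw [ent_zero' hr b q (j+p) j hb.1 hb.2 (by omega) hj2 hj1 (by omega)
        (by omega) (by omega) (by omega) (by omega), mul_zero]
    · rw [IH (b,q) hgt, zero_mul]
  rw [Finset.sum_eq_single_of_mem p (by rw [pBox, Finset.mem_Icc]; omega) hz] at h
  rw [← h]
  apply Finset.sum_congr rfl
  intro q _
  rw [ent_col hr p q j hp1 hp2 hj1 hj2]

lemma diag0_sum (IH : ∀ x : ℤ×ℤ, 0 < x.1 → c x = 0)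
    (k : ℤ) (hk1 : 1 ≤ k) (hk2 : k ≤ (r:ℤ)-1) :
    ∑ q ∈ qBox r, c (0, q) * (tconst r ^ (2*q*k) + tconst r ^ (-(2*q*k))) = 0 := by
  have hrz : (2:ℤ) ≤ (r:ℤ) := by exact_mod_cast hr
  have h := hsum k k hk1 hk2 hk1 hk2
  rw [GBox, Finset.sum_product] at h
  have hz : ∀ b ∈ pBox r, b ≠ 0 → (∑ q ∈ qBox r, c (b,q) * ent r b q k k) = 0 := by
    intro b hb hbne
    rw [pBox, Finset.mem_Icc] at hb
    apply Finset.sum_eq_zero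
    intro q _
    rw [IH (b,q) (by simp; omega), zero_mul]
  rw [Finset.sum_eq_single_of_mem 0 (by rw [pBox, Finset.mem_Icc]; omega) hz] at h
  rw [← h]
  apply Finset.sum_congr rfl
  intro q _
  rw [ent_diag0 hr q k hk1 hk2]

omit hsum in
lemma solve_p (hsupp : ∀ x, ¬ Pred r x → c x = 0)
    (p : ℤ) (hp1 : 1 ≤ p) (hp2 : p ≤ (r:ℤ)-2)
    (hrow : ∀ k : ℤ, 1 ≤ k → k + p ≤ (r:ℤ)-1 →
      ∑ q ∈ qBox r, c (p,q) * tconst r ^ (q*(p+2*k)) = 0)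
    (hcol : ∀ j : ℤ, 1 ≤ j → j + p ≤ (r:ℤ)-1 →
      ∑ q ∈ qBox r, c (p,q) * tconst r ^ (-(q*(p+2*j))) = 0) :
    ∀ q, c (p, q) = 0 := by
  have hrz : (2:ℤ) ≤ (r:ℤ) := by exact_mod_cast hr
  set a : ℤ := p + 2 - (r:ℤ) with ha
  set b : ℤ := (r:ℤ) - 1 - p with hb
  have hab : a ≤ b := by omega
  have hq0 : ∀ q : ℤ, q < a ∨ b < q → c (p, q) = 0 := by
    intro q hq
    apply hsupp
    rw [Pred]
    push_neg
    constructor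
    · intro h0; omega
    · intro _ _; omega
  set Pol : Polynomial ℂ := ∑ q ∈ Finset.Icc a b, Polynomial.C (c (p,q)) * Polynomial.X ^ (q - a).toNat with hPol
  -- bridge
  have key : ∀ e : ℤ, (∑ q ∈ qBox r, c (p,q) * tconst r ^ (q*e))
      = tconst r ^ (a*e) * Pol.eval (tconst r ^ e) := by
    intro e
    have hsub : Finset.Icc a b ⊆ qBox r := by
      intro x hx
      rw [Finset.mem_Icc] at hx
      rw [qBox, Finset.mem_Icc]
      omega
    rw [← Finset.sum_subset hsub (by
      intro x hx hxn
      rw [Finset.mem_Icc] at hxn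
      rw [hq0 x (by omega), zero_mul])]
    rw [hPol, Polynomial.eval_finset_sum, Finset.mul_sum]
    apply Finset.sum_congr rfl
    intro q hq
    rw [Finset.mem_Icc] at hq
    rw [Polynomial.eval_mul, Polynomial.eval_C, Polynomial.eval_pow, Polynomial.eval_X]
    rw [← zpow_natCast (tconst r ^ e), ← _root_.zpow_mul]
    rw [Int.toNat_of_nonneg (by omega : (0:ℤ) ≤ q - a)]
    rw [mul_comm (tconst r ^ (a*e)), mul_assoc, ← zpow_add₀ (t_ne r)]
    congr 2
    ring
  -- root set
  set S : Finset ℂ := ((Finset.Icc 1 b).image fun k => tconst r ^ (p+2*k)) ∪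
      ((Finset.Icc 1 b).image fun k => tconst r ^ (-(p+2*k))) with hS
  have hinj1 : Set.InjOn (fun k : ℤ => tconst r ^ (p+2*k)) (Finset.Icc 1 b) := by
    intro x hx y hy hxy
    simp only [Finset.coe_Icc, Set.mem_Icc] at hx hy
    have := (t_pow_eq_iff r (by omega) _ _).mp hxy
    have h2 : ¬ (4*(r:ℤ)) ∣ (p + 2*x - (p + 2*y)) ∨ x = y := by
      by_cases hxy2 : x = y
      · right; exact hxy2
      · left; exact not_dvd (by omega) (by omega) (by omega) (by omega)
    rcases h2 with h2 | h2
    · exact absurd this h2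
    · exact h2
  have hinj2 : Set.InjOn (fun k : ℤ => tconst r ^ (-(p+2*k))) (Finset.Icc 1 b) := by
    intro x hx y hy hxy
    simp only [Finset.coe_Icc, Set.mem_Icc] at hx hy
    have := (t_pow_eq_iff r (by omega) _ _).mp hxy
    by_cases hxy2 : x = y
    · exact hxy2
    · exact absurd this (not_dvd (by omega) (by omega) (by omega) (by omega))
  have hdisj : Disjoint ((Finset.Icc 1 b).image fun k => tconst r ^ (p+2*k))
      ((Finset.Icc 1 b).image fun k => tconst r ^ (-(p+2*k))) := by
    rw [Finset.disjoint_left]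
    intro z hz1 hz2
    simp only [Finset.mem_image, Finset.mem_Icc] at hz1 hz2
    obtain ⟨x, hx, rfl⟩ := hz1
    obtain ⟨y, hy, hyz⟩ := hz2
    have := (t_pow_eq_iff r (by omega) _ _).mp hyz
    exact not_dvd (by omega) (by omega) (by omega) (by omega) this
  have hScard : S.card = (2*(b:ℤ)).toNat := by
    rw [hS, Finset.card_union_of_disjoint hdisj,
      Finset.card_image_of_injOn hinj1, Finset.card_image_of_injOn hinj2, Int.card_Icc]
    omega
  have hdeg : Pol.natDegree ≤ (b - a).toNat := by
    apply Polynomial.natDegree_sum_le_of_forall_le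
    intro q hq
    rw [Finset.mem_Icc] at hq
    refine le_trans (Polynomial.natDegree_C_mul_le _ _) ?_
    rw [Polynomial.natDegree_X_pow]
    omega
  have heval : ∀ z ∈ S, Pol.eval z = 0 := by
    intro z hz
    rw [hS, Finset.mem_union] at hz
    rcases hz with hz | hz <;> simp only [Finset.mem_image, Finset.mem_Icc] at hz <;>
      obtain ⟨k, hk, rfl⟩ := hz
    · have h0 := hrow k hk.1 (by omega)
      rw [key (p+2*k)] at h0
      exact (mul_eq_zero.mp h0).resolve_left (zpow_ne_zero _ (t_ne r))
    · have h0 := hcol k hk.1 (by omega)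
      have h0' : ∑ q ∈ qBox r, c (p,q) * tconst r ^ (q * (-(p+2*k))) = 0 := by
        rw [← h0]
        apply Finset.sum_congr rfl
        intro q _
        congr 2
        ring
      rw [key (-(p+2*k))] at h0'
      exact (mul_eq_zero.mp h0').resolve_left (zpow_ne_zero _ (t_ne r))
  have hPol0 : Pol = 0 := by
    apply Polynomial.eq_zero_of_natDegree_lt_card_of_eval_eq_zero' Pol S heval
    rw [hScard]
    omega
  -- coefficient extraction
  have hcoeff : ∀ q0 ∈ Finset.Icc a b, Pol.coeff (q0 - a).toNat = c (p, q0) := by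
    intro q0 hq0m
    have hq0m' := Finset.mem_Icc.mp hq0m
    rw [hPol, Polynomial.finset_sum_coeff]
    rw [Finset.sum_eq_single_of_mem q0 hq0m]
    · rw [Polynomial.coeff_C_mul, Polynomial.coeff_X_pow, if_pos rfl, mul_one]
    · intro q hq hne
      rw [Finset.mem_Icc] at hq
      rw [Polynomial.coeff_C_mul, Polynomial.coeff_X_pow, if_neg (by omega), mul_zero]
  intro q
  by_cases hqm : a ≤ q ∧ q ≤ b
  · rw [← hcoeff q (Finset.mem_Icc.mpr hqm), hPol0]
    simp
  · exact hq0 q (by omega)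

omit hsum in
lemma solve0 (hsupp : ∀ x, ¬ Pred r x → c x = 0)
    (hdiag : ∀ k : ℤ, 1 ≤ k → k ≤ (r:ℤ)-1 →
      ∑ q ∈ qBox r, c (0,q) * (tconst r ^ (2*q*k) + tconst r ^ (-(2*q*k))) = 0) :
    ∀ q, c (0, q) = 0 := by
  have hrz : (2:ℤ) ≤ (r:ℤ) := by exact_mod_cast hr
  have hq0 : ∀ q : ℤ, q < 0 ∨ (r:ℤ)-2 < q → c (0, q) = 0 := by
    intro q hq
    apply hsupp
    rw [Pred]
    push_neg
    constructor
    · intro _; omega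
    · intro h1; omega
  set Pol : Polynomial ℂ := ∑ q ∈ Finset.Icc (0:ℤ) ((r:ℤ)-2),
      Polynomial.C (c (0,q)) * Polynomial.dickson 1 (1:ℂ) q.toNat with hPolDef
  have heval : ∀ k : ℤ, 1 ≤ k → k ≤ (r:ℤ)-1 →
      Pol.eval (tconst r ^ (2*k) + tconst r ^ (-(2*k))) = 0 := by
    intro k hk1 hk2
    have hxy : tconst r ^ (2*k) * tconst r ^ (-(2*k)) = 1 := by
      rw [← zpow_add₀ (t_ne r), show 2*k + -(2*k) = 0 from by ring, zpow_zero]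
    have h0 := hdiag k hk1 hk2
    have hsub : Finset.Icc (0:ℤ) ((r:ℤ)-2) ⊆ qBox r := by
      intro x hx
      rw [Finset.mem_Icc] at hx
      rw [qBox, Finset.mem_Icc]
      omega
    rw [← Finset.sum_subset hsub (by
      intro x hx hxn
      rw [Finset.mem_Icc] at hxn
      rw [hq0 x (by omega), zero_mul])] at h0
    rw [hPolDef, Polynomial.eval_finset_sum, ← h0]
    apply Finset.sum_congr rfl
    intro q hq
    rw [Finset.mem_Icc] at hq
    rw [Polynomial.eval_mul, Polynomial.eval_C,
      Polynomial.dickson_one_one_eval_add_inv _ _ hxy]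
    congr 2
    · rw [← zpow_natCast (tconst r ^ (2*k)), ← _root_.zpow_mul]
      congr 1
      rw [Int.toNat_of_nonneg (by omega : (0:ℤ) ≤ q)]
      ring
    · rw [← zpow_natCast (tconst r ^ (-(2*k))), ← _root_.zpow_mul]
      congr 1
      rw [Int.toNat_of_nonneg (by omega : (0:ℤ) ≤ q)]
      ring
  set S : Finset ℂ := (Finset.Icc (1:ℤ) ((r:ℤ)-1)).image
      (fun k => tconst r ^ (2*k) + tconst r ^ (-(2*k))) with hSdef
  have hinj : Set.InjOn (fun k : ℤ => tconst r ^ (2*k) + tconst r ^ (-(2*k)))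
      (Finset.Icc (1:ℤ) ((r:ℤ)-1)) := by
    intro x hx y hy hxy
    simp only [Finset.coe_Icc, Set.mem_Icc] at hx hy
    have hu1 : tconst r ^ (2*x) * tconst r ^ (-(2*x)) = 1 := by
      rw [← zpow_add₀ (t_ne r), show 2*x + -(2*x) = 0 from by ring, zpow_zero]
    have hu2 : tconst r ^ (2*y) * tconst r ^ (-(2*y)) = 1 := by
      rw [← zpow_add₀ (t_ne r), show 2*y + -(2*y) = 0 from by ring, zpow_zero]
    have hxy' : tconst r ^ (2*x) + tconst r ^ (-(2*x))
        = tconst r ^ (2*y) + tconst r ^ (-(2*y)) := hxy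
    have hfac : (tconst r ^ (2*x) - tconst r ^ (2*y)) *
        (tconst r ^ (2*x) * tconst r ^ (2*y) - 1) = 0 := by
      linear_combination (tconst r ^ (2*x) * tconst r ^ (2*y)) * hxy'
        - tconst r ^ (2*y) * hu1 + tconst r ^ (2*x) * hu2
    rcases mul_eq_zero.mp hfac with h | h
    · have heq : tconst r ^ (2*x) = tconst r ^ (2*y) := by linear_combination h
      have := (t_pow_eq_iff r (by omega) _ _).mp heq
      by_cases hxy2 : x = y
      · exact hxy2
      · exact absurd this (not_dvd (by omega) (by omega) (by omega) (by omega))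
    · have heq : tconst r ^ (2*x + 2*y) = tconst r ^ (0:ℤ) := by
        rw [zpow_add₀ (t_ne r), zpow_zero]
        linear_combination h
      have := (t_pow_eq_iff r (by omega) _ _).mp heq
      exact absurd this (not_dvd (by omega) (by omega) (by omega) (by omega))
  have hScard : S.card = ((r:ℤ)-1).toNat := by
    rw [hSdef, Finset.card_image_of_injOn hinj, Int.card_Icc]
    omega
  have hdeg : Pol.natDegree ≤ ((r:ℤ)-2).toNat := by
    apply Polynomial.natDegree_sum_le_of_forall_le
    intro q hq
    rw [Finset.mem_Icc] at hq
    refine le_trans (Polynomial.natDegree_C_mul_le _ _) ?_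
    refine le_trans (dickson_facts q.toNat).1 ?_
    omega
  have hPol0 : Pol = 0 := by
    apply Polynomial.eq_zero_of_natDegree_lt_card_of_eval_eq_zero' Pol S ?_ ?_
    · intro z hz
      rw [hSdef, Finset.mem_image] at hz
      obtain ⟨k, hk, rfl⟩ := hz
      rw [Finset.mem_Icc] at hk
      exact heval k hk.1 hk.2
    · rw [hScard]
      omega
  refine downward (fun q => c (0, q) = 0) ((r:ℤ)-2) (fun j hj => hq0 j (Or.inr hj)) ?_
  intro j hjB hup
  rcases lt_or_ge j 0 with hj0 | hj0
  · exact hq0 j (Or.inl hj0)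
  have hcoeff : Pol.coeff j.toNat = c (0, j) * (if j.toNat = 0 then 2 else 1) := by
    rw [hPolDef, Polynomial.finset_sum_coeff]
    rw [Finset.sum_eq_single_of_mem j (Finset.mem_Icc.mpr ⟨hj0, hjB⟩)]
    · rw [Polynomial.coeff_C_mul, (dickson_facts j.toNat).2]
    · intro q hq hne
      rw [Finset.mem_Icc] at hq
      rcases lt_or_gt_of_ne hne with hlt | hgt
      · rw [Polynomial.coeff_C_mul,
          Polynomial.coeff_eq_zero_of_natDegree_lt
            (lt_of_le_of_lt (dickson_facts q.toNat).1 (by omega)), mul_zero]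
      · rw [hup q hgt, Polynomial.coeff_C_mul]
        simp
  rw [hPol0, Polynomial.coeff_zero] at hcoeff
  rcases mul_eq_zero.mp hcoeff.symm with h | h
  · exact h
  · exfalso
    revert h
    split <;> norm_num


omit hsum in
lemma indep (hsupp : ∀ x, ¬ Pred r x → c x = 0)
    (hsum2 : ∀ k m : ℤ, 1 ≤ k → k ≤ (r:ℤ)-1 → 1 ≤ m → m ≤ (r:ℤ)-1 →
      ∑ x ∈ GBox r, c x * ent r x.1 x.2 k m = 0) :
    ∀ x, c x = 0 := by
  have hrz : (2:ℤ) ≤ (r:ℤ) := by exact_mod_cast hr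
  suffices h : ∀ p : ℤ, ∀ q : ℤ, c (p, q) = 0 by
    intro x
    have := h x.1 x.2
    simpa using this
  refine downward (fun p => ∀ q, c (p,q) = 0) ((r:ℤ)-2) ?_ ?_
  · intro p hp q
    apply hsupp
    rw [Pred]
    push_neg
    exact ⟨fun h0 => by omega, fun h1 => by omega⟩
  · intro p hpB hup
    have IH : ∀ x : ℤ×ℤ, p < x.1 → c x = 0 := by
      intro x hx
      have := hup x.1 hx x.2
      simpa using this
    rcases lt_trichotomy p 0 with h | h | h
    · intro q
      apply hsupp
      rw [Pred]
      push_neg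
      exact ⟨fun h0 => by omega, fun h1 => by omega⟩
    · subst h
      exact solve0 hr c hsupp (fun k hk1 hk2 => diag0_sum hr c hsum2 IH k hk1 hk2)
    · exact solve_p hr c hsupp p h hpB
        (fun k hk1 hk2 => row_sum hr c hsum2 p h hpB IH k hk1 hk2)
        (fun j hj1 hj2 => col_sum hr c hsum2 p h hpB IH j hj1 hj2)

end Main
end CmatAux

lemma Cmat_ent (r : ℕ) (p q : ℤ) (k m : Fin (r-1)) :
    Cmat r p q k m = CmatAux.ent r p q ((k:ℤ)+1) ((m:ℤ)+1) := rfl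

instance (r : ℕ) : DecidablePred (CmatAux.Pred r) := fun x => by
  unfold CmatAux.Pred; infer_instance

lemma gauss_sum : ∀ N : ℕ, (∑ n ∈ Finset.range N, 2*(n+1)) = N*(N+1) := by
  intro N
  induction N with
  | zero => simp
  | succ N ih =>
    rw [Finset.sum_range_succ, ih]
    ring

open CmatAux in
lemma card_F (r : ℕ) (hr : 2 ≤ r) :
    ((GBox r).filter (Pred r)).card = (r-1)*(r-1) := by
  classical
  have hrz : (2:ℤ) ≤ (r:ℤ) := by exact_mod_cast hr
  have hF : (GBox r).filter (Pred r) = (Finset.Icc (0:ℤ) ((r:ℤ)-2)).biUnion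
      (fun p => ({p} : Finset ℤ) ×ˢ Finset.Icc
        (if p = 0 then 0 else -(r:ℤ)+p+2) (if p = 0 then (r:ℤ)-2 else (r:ℤ)-p-1)) := by
    ext x
    simp only [Finset.mem_filter, Finset.mem_biUnion, Finset.mem_product, Finset.mem_Icc,
      Finset.mem_singleton, GBox, pBox, qBox, Pred]
    constructor
    · rintro ⟨⟨hp, hq⟩, hP | hP⟩
      · refine ⟨x.1, by omega, rfl, ?_⟩
        rw [if_pos hP.1, if_pos hP.1]
        omega
      · refine ⟨x.1, by omega, rfl, ?_⟩
        rw [if_neg (by omega), if_neg (by omega)]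
        omega
    · rintro ⟨p, hp, hx1, hq⟩
      subst hx1
      by_cases hp0 : x.1 = 0
      · rw [if_pos hp0, if_pos hp0] at hq
        exact ⟨⟨by omega, by omega⟩, Or.inl ⟨hp0, by omega⟩⟩
      · rw [if_neg hp0, if_neg hp0] at hq
        exact ⟨⟨by omega, by omega⟩, Or.inr ⟨by omega, by omega, by omega, by omega⟩⟩
  rw [hF, Finset.card_biUnion]
  · have hsplit : Finset.Icc (0:ℤ) ((r:ℤ)-2) = insert 0 (Finset.Icc 1 ((r:ℤ)-2)) := by
      ext y
      simp only [Finset.mem_Icc, Finset.mem_insert]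
      omega
    rw [hsplit, Finset.sum_insert (by simp [Finset.mem_Icc])]
    have h0card : (({(0:ℤ)} : Finset ℤ) ×ˢ Finset.Icc
        (if (0:ℤ) = 0 then 0 else -(r:ℤ)+0+2) (if (0:ℤ) = 0 then (r:ℤ)-2 else (r:ℤ)-0-1)).card
        = r - 1 := by
      rw [if_pos rfl, if_pos rfl, Finset.card_product, Finset.card_singleton, Int.card_Icc]
      omega
    rw [h0card]
    have int_sum_lin : ∀ (a : ℤ) (N : ℕ),
        (∑ n ∈ Finset.range N, (a - 2*(n:ℤ))) = N*a - N*(N-1) := by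
      intro a N
      induction N with
      | zero => simp
      | succ N ih =>
        rw [Finset.sum_range_succ, ih]
        push_cast
        ring
    have hcast : ∀ p ∈ Finset.Icc (1:ℤ) ((r:ℤ)-2),
        (((({p} : Finset ℤ) ×ˢ Finset.Icc (if p = 0 then 0 else -(r:ℤ)+p+2)
          (if p = 0 then (r:ℤ)-2 else (r:ℤ)-p-1)).card : ℕ) : ℤ) = 2*(r:ℤ)-2*p-2 := by
      intro p hp
      rw [Finset.mem_Icc] at hp
      rw [if_neg (by omega), if_neg (by omega), Finset.card_product,
        Finset.card_singleton, Int.card_Icc]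
      omega
    have hreindex : (∑ p ∈ Finset.Icc (1:ℤ) ((r:ℤ)-2), (2*(r:ℤ)-2*p-2))
        = ∑ n ∈ Finset.range (r-2), ((2*(r:ℤ)-4) - 2*(n:ℤ)) := by
      refine Finset.sum_nbij' (fun p => (p-1).toNat) (fun n => (n:ℤ)+1) ?_ ?_ ?_ ?_ ?_
      · intro a ha
        rw [Finset.mem_Icc] at ha
        rw [Finset.mem_range]
        omega
      · intro n hn
        rw [Finset.mem_range] at hn
        rw [Finset.mem_Icc]
        omega
      · intro a ha
        rw [Finset.mem_Icc] at ha
        omega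
      · intro n hn
        rw [Finset.mem_range] at hn
        omega
      · intro p hp
        rw [Finset.mem_Icc] at hp
        omega
    have hNz : ((r - 2 : ℕ) : ℤ) = (r:ℤ) - 2 := by omega
    have hsumZ : ((∑ p ∈ Finset.Icc (1:ℤ) ((r:ℤ)-2),
        (({p} : Finset ℤ) ×ˢ Finset.Icc (if p = 0 then 0 else -(r:ℤ)+p+2)
          (if p = 0 then (r:ℤ)-2 else (r:ℤ)-p-1)).card : ℕ) : ℤ)
        = ((r:ℤ)-2)*((r:ℤ)-1) := by
      rw [Nat.cast_sum, Finset.sum_congr rfl hcast, hreindex, int_sum_lin, hNz]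
      ring
    have h1r : 1 ≤ r := by omega
    set S : ℕ := ∑ p ∈ Finset.Icc (1:ℤ) ((r:ℤ)-2),
        (({p} : Finset ℤ) ×ˢ Finset.Icc (if p = 0 then 0 else -(r:ℤ)+p+2)
          (if p = 0 then (r:ℤ)-2 else (r:ℤ)-p-1)).card with hSdef
    have hcastgoal : ((r - 1 + S : ℕ) : ℤ) = (((r-1)*(r-1) : ℕ) : ℤ) := by
      rw [Nat.cast_add, Nat.cast_mul, Nat.cast_sub h1r, Nat.cast_one, hSdef, hsumZ]
      ring
    exact_mod_cast hcastgoal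
  · intro p hp q hq hne
    simp only [Function.onFun]
    rw [Finset.disjoint_left]
    intro a ha hb
    rw [Finset.mem_product, Finset.mem_singleton] at ha hb
    exact hne (ha.1 ▸ hb.1 ▸ rfl)

/-- The matrices `C(0,q)` for `0 ≤ q ≤ r−2` together with `C(p,q)` for `1 ≤ p ≤ r−2`,
`−r+p+2 ≤ q ≤ r−p−1` form a basis of the space of all `(r−1)×(r−1)` complex matrices. -/
theorem Cmat_family_is_basis (r : ℕ) (hr : 2 ≤ r) :
    LinearIndependent ℂ (fun i : BasisIdx r => Cmat r i.1.1 i.1.2) ∧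
      Submodule.span ℂ (Set.range fun i : BasisIdx r => Cmat r i.1.1 i.1.2) = ⊤ := by
  classical
  have hrz : (2:ℤ) ≤ (r:ℤ) := by exact_mod_cast hr
  have key : LinearIndependent ℂ (fun i : BasisIdx r => Cmat r i.1.1 i.1.2) := by
    rw [linearIndependent_iff']
    intro s g hg i hi
    set c : ℤ×ℤ → ℂ := fun x =>
      if h : CmatAux.Pred r x then
        (if (⟨x, h⟩ : BasisIdx r) ∈ s then g ⟨x, h⟩ else 0) else 0 with hc
    have hgc : ∀ j ∈ s, c j.1 = g j := by
      rintro ⟨x, hx⟩ hj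
      have hx' : CmatAux.Pred r x := hx
      rw [hc]
      dsimp only
      rw [dif_pos hx']
      exact if_pos hj
    have hsupp : ∀ x, ¬ CmatAux.Pred r x → c x = 0 := by
      intro x hx
      rw [hc]
      exact dif_neg hx
    have hsum2 : ∀ k m : ℤ, 1 ≤ k → k ≤ (r:ℤ)-1 → 1 ≤ m → m ≤ (r:ℤ)-1 →
        ∑ x ∈ CmatAux.GBox r, c x * CmatAux.ent r x.1 x.2 k m = 0 := by
      intro k m hk1 hk2 hm1 hm2
      have hkN : (k-1).toNat < r - 1 := by omega
      have hmN : (m-1).toNat < r - 1 := by omega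
      set kF : Fin (r-1) := ⟨(k-1).toNat, hkN⟩ with hkF
      set mF : Fin (r-1) := ⟨(m-1).toNat, hmN⟩ with hmF
      have hkc : ((kF:ℤ)+1) = k := by
        simp only [hkF, Fin.val_mk]
        omega
      have hmc : ((mF:ℤ)+1) = m := by
        simp only [hmF, Fin.val_mk]
        omega
      have hg2 : ∑ j ∈ s, g j * Cmat r j.1.1 j.1.2 kF mF = 0 := by
        have h0 := congrFun (congrFun hg kF) mF
        rw [Matrix.sum_apply] at h0
        simpa [Matrix.smul_apply, smul_eq_mul] using h0
      have himg : ∑ x ∈ s.image (fun j : BasisIdx r => j.1),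
            c x * CmatAux.ent r x.1 x.2 k m
          = ∑ j ∈ s, c j.1 * CmatAux.ent r j.1.1 j.1.2 k m :=
        Finset.sum_image (fun a _ b _ h => Subtype.ext h)
      have hstep : ∑ x ∈ CmatAux.GBox r, c x * CmatAux.ent r x.1 x.2 k m
          = ∑ j ∈ s, g j * Cmat r j.1.1 j.1.2 kF mF := by
        rw [← Finset.sum_subset
          (show s.image (fun j : BasisIdx r => j.1) ⊆ CmatAux.GBox r from ?_) ?_]
        · rw [himg]
          apply Finset.sum_congr rfl
          intro j hj
          rw [hgc j hj, Cmat_ent, hkc, hmc]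
        · intro x hxi
          rw [Finset.mem_image] at hxi
          obtain ⟨j, hj, rfl⟩ := hxi
          have hPj : CmatAux.Pred r j.1 := j.2
          rw [CmatAux.GBox, Finset.mem_product, CmatAux.pBox, CmatAux.qBox,
            Finset.mem_Icc, Finset.mem_Icc]
          rcases hPj with h | h <;> omega
        · intro x hxG hxn
          rw [hc]
          dsimp only
          split
          · rename_i hPx
            split
            · rename_i hmem
              exfalso
              exact hxn (Finset.mem_image.mpr ⟨⟨x, hPx⟩, hmem, rfl⟩)
            · rw [zero_mul]
          · rw [zero_mul]
      rw [hstep, hg2]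
    have main := CmatAux.indep hr c hsupp hsum2
    rw [← hgc i hi]
    exact main i.1
  refine ⟨key, ?_⟩
  have hmemF : ∀ x : ℤ×ℤ, x ∈ (CmatAux.GBox r).filter (CmatAux.Pred r) ↔ CmatAux.Pred r x := by
    intro x
    rw [Finset.mem_filter]
    constructor
    · exact fun h => h.2
    · intro h
      refine ⟨?_, h⟩
      rw [CmatAux.GBox, Finset.mem_product, CmatAux.pBox, CmatAux.qBox,
        Finset.mem_Icc, Finset.mem_Icc]
      rcases h with h | h <;> omega
  haveI instF : Fintype {x : ℤ×ℤ // CmatAux.Pred r x} := Fintype.subtype _ hmemF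
  haveI : Fintype (BasisIdx r) := instF
  haveI : Nonempty (BasisIdx r) := ⟨⟨(0,0), Or.inl ⟨rfl, le_refl 0, by omega⟩⟩⟩
  apply key.span_eq_top_of_card_eq_finrank
  rw [Fintype.card_congr (show BasisIdx r ≃ {x : ℤ×ℤ // CmatAux.Pred r x} from Equiv.refl _),
    Fintype.card_of_subtype _ hmemF, card_F r hr, Module.finrank_matrix]
  simp [Fintype.card_fin]
end

section
/- Let r ≥ 2 be an integer. The r−1 diagonal matrices C(0,q), 0 ≤ q ≤ r−2 (the matrix C(0,q) is diagonal with diagonal entries 2cos(qkπ/r), k = 1, …, r−1), form a basis of the complex vector space of diagonal (r−1)×(r−1) matrices. -/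
open Complex Matrix

namespace CmatAux

/-- `ζ = exp(2πi/(2r))`, a primitive `2r`-th root of unity. -/
noncomputable def zeta (r : ℕ) : ℂ := Complex.exp (2 * Real.pi * Complex.I / ((2 * r : ℕ) : ℂ))

lemma zeta_ne_zero (r : ℕ) : zeta r ≠ 0 := Complex.exp_ne_zero _

lemma zeta_prim (r : ℕ) (hr : 2 ≤ r) : IsPrimitiveRoot (zeta r) (2 * r) :=
  Complex.isPrimitiveRoot_exp (2 * r) (by omega)

lemma tconst_sq (r : ℕ) : tconst r ^ (2 : ℤ) = zeta r := by
  rw [show (2:ℤ) = ((2:ℕ):ℤ) from rfl, zpow_natCast]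
  unfold tconst zeta
  rw [sq, ← Complex.exp_add]
  congr 1
  push_cast
  ring

lemma tconst_zpow (r : ℕ) (m : ℤ) : tconst r ^ (2 * m) = zeta r ^ m := by
  rw [_root_.zpow_mul, tconst_sq]

/-- The diagonal of `Cmat r 0 q`. -/
noncomputable def dvec (r : ℕ) (q : ℤ) : Fin (r - 1) → ℂ :=
  fun k => zeta r ^ (q * ((k : ℤ) + 1)) + zeta r ^ (-(q * ((k : ℤ) + 1)))

lemma eps_diag {r : ℕ} (hr : 2 ≤ r) (k m : Fin (r - 1)) :
    eps r ((k : ℤ) + 1) ((m : ℤ) + 1) = if k = m then 1 else 0 := by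
  have hk := k.isLt; have hm := m.isLt
  unfold eps
  rcases eq_or_ne k m with h | h
  · subst h; simp
  · have hkm : ((m : ℤ)) ≠ ((k : ℤ)) := by
      intro hh
      exact h (Fin.ext (by exact_mod_cast hh.symm))
    have h1 : ¬ (2 * (r : ℤ)) ∣ ((m : ℤ) - (k : ℤ)) := by
      intro hd
      have h0 := Int.eq_zero_of_abs_lt_dvd hd (by rw [abs_lt]; omega)
      omega
    have h2 : ¬ (2 * (r : ℤ)) ∣ (((m : ℤ) + 1) + ((k : ℤ) + 1)) := by
      intro hd
      have h0 := Int.eq_zero_of_abs_lt_dvd hd (by rw [abs_lt]; omega)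
      omega
    rw [show ((m : ℤ) + 1) - ((k : ℤ) + 1) = (m : ℤ) - (k : ℤ) from by ring,
      if_neg h1, if_neg h2, if_neg h]

lemma Cmat_zero (r : ℕ) (hr : 2 ≤ r) (q : ℤ) :
    Cmat r 0 q = Matrix.diagonal (dvec r q) := by
  ext k m
  rw [Cmat, Matrix.of_apply, Matrix.diagonal_apply]
  have e2 : tconst r ^ (2 * q * ((m : ℤ) + 1)) = zeta r ^ (q * ((m : ℤ) + 1)) := by
    rw [show 2 * q * ((m : ℤ) + 1) = 2 * (q * ((m : ℤ) + 1)) from by ring, tconst_zpow]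
  have e3 : tconst r ^ (-(2 * q * ((m : ℤ) + 1))) = zeta r ^ (-(q * ((m : ℤ) + 1))) := by
    rw [show -(2 * q * ((m : ℤ) + 1)) = 2 * (-(q * ((m : ℤ) + 1))) from by ring, tconst_zpow]
  rw [sub_zero, add_zero, e2, e3, eps_diag hr k m]
  rcases eq_or_ne k m with h | h
  · subst h
    simp [dvec]
  · simp [h]

lemma dvec_li (r : ℕ) (hr : 2 ≤ r) :
    LinearIndependent ℂ (fun q : Fin (r - 1) => dvec r (q : ℤ)) := by
  have hζ := zeta_ne_zero r
  have hprim := zeta_prim r hr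
  have hzr : zeta r ^ ((2 * r : ℕ) : ℤ) = 1 := by
    rw [zpow_natCast]; exact hprim.pow_eq_one
  apply Fintype.linearIndependent_iff.mpr
  intro c hc q
  -- the auxiliary sum
  set S : ℤ → ℂ := fun j => ∑ q' : Fin (r - 1),
      c q' * (zeta r ^ ((q' : ℤ) * j) + zeta r ^ (-((q' : ℤ) * j))) with hS
  have hSper : ∀ j : ℤ, S (j + 2 * r) = S j := by
    intro j
    apply Finset.sum_congr rfl
    intro q' _
    congr 2
    · rw [show (q' : ℤ) * (j + 2 * r) = (q' : ℤ) * j + ((2 * r : ℕ) : ℤ) * ((q' : ℕ) : ℤ) from by push_cast; ring,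
        zpow_add₀ hζ, _root_.zpow_mul (zeta r) ((2 * r : ℕ) : ℤ) ((q' : ℕ) : ℤ), hzr,
        _root_.one_zpow, mul_one]
    · rw [show -((q' : ℤ) * (j + 2 * r)) = -((q' : ℤ) * j) + ((2 * r : ℕ) : ℤ) * (-((q' : ℕ) : ℤ)) from by push_cast; ring,
        zpow_add₀ hζ, _root_.zpow_mul (zeta r) ((2 * r : ℕ) : ℤ) (-((q' : ℕ) : ℤ)), hzr,
        _root_.one_zpow, mul_one]
  have hSneg : ∀ j : ℤ, S (-j) = S j := by
    intro j
    apply Finset.sum_congr rfl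
    intro q' _
    rw [show (q' : ℤ) * -j = -((q' : ℤ) * j) from by ring, neg_neg, add_comm]
  have hSzero : ∀ k : Fin (r - 1), S ((k : ℤ) + 1) = 0 := by
    intro k
    have := congrFun hc k
    simp only [Finset.sum_apply, Pi.smul_apply, Pi.zero_apply, smul_eq_mul] at this
    rw [hS]
    rw [← this]
    apply Finset.sum_congr rfl
    intro q' _
    rw [dvec, mul_comm ((q' : ℤ)) (((k : ℤ)) + 1)]
  -- the polynomial
  set P : Polynomial ℂ := ∑ q' : Fin (r - 1),
      Polynomial.C (c q') * (Polynomial.X ^ (r - 2 + (q' : ℕ)) + Polynomial.X ^ (r - 2 - (q' : ℕ)))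
    with hP
  have hPdeg : P.natDegree < 2 * (r - 1) := by
    have : P.natDegree ≤ 2 * r - 4 := by
      apply Polynomial.natDegree_sum_le_of_forall_le
      intro q' _
      have hq' := q'.isLt
      refine le_trans (Polynomial.natDegree_C_mul_le _ _) ?_
      refine le_trans (Polynomial.natDegree_add_le _ _) ?_
      simp only [Polynomial.natDegree_X_pow]
      omega
    omega
  -- evaluation at powers of ζ
  have heval : ∀ j : ℕ, P.eval (zeta r ^ j) = zeta r ^ ((j : ℤ) * ((r : ℤ) - 2)) * S (j : ℤ) := by
    intro j
    rw [hP]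
    simp only [Polynomial.eval_finset_sum, Polynomial.eval_mul, Polynomial.eval_C,
      Polynomial.eval_add, Polynomial.eval_pow, Polynomial.eval_X]
    rw [hS, Finset.mul_sum]
    apply Finset.sum_congr rfl
    intro q' _
    have hq' : (q' : ℕ) ≤ r - 2 := by have := q'.isLt; omega
    have c1 : ((r - 2 + (q' : ℕ) : ℕ) : ℤ) = (r : ℤ) - 2 + (q' : ℤ) := by
      have : ((r - 2 : ℕ) : ℤ) = (r : ℤ) - 2 := by omega
      push_cast [this]; ring
    have c2 : ((r - 2 - (q' : ℕ) : ℕ) : ℤ) = (r : ℤ) - 2 - (q' : ℤ) := by omega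
    have e1 : (zeta r ^ j) ^ (r - 2 + (q' : ℕ)) =
        zeta r ^ ((j : ℤ) * ((r : ℤ) - 2)) * zeta r ^ ((q' : ℤ) * (j : ℤ)) := by
      rw [← pow_mul, ← zpow_natCast (zeta r) (j * (r - 2 + (q' : ℕ))), ← zpow_add₀ hζ]
      congr 1
      push_cast [c1]
      ring
    have e2 : (zeta r ^ j) ^ (r - 2 - (q' : ℕ)) =
        zeta r ^ ((j : ℤ) * ((r : ℤ) - 2)) * zeta r ^ (-((q' : ℤ) * (j : ℤ))) := by
      rw [← pow_mul, ← zpow_natCast (zeta r) (j * (r - 2 - (q' : ℕ))), ← zpow_add₀ hζ]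
      congr 1
      push_cast [c2]
      ring
    rw [e1, e2]
    ring
  -- P vanishes on 2(r-1) distinct points
  have hP0 : P = 0 := by
    apply Polynomial.eq_zero_of_natDegree_lt_card_of_eval_eq_zero P
      (f := fun i : Fin (r - 1) ⊕ Fin (r - 1) =>
        match i with
        | Sum.inl k => zeta r ^ ((k : ℕ) + 1)
        | Sum.inr k => zeta r ^ (2 * r - ((k : ℕ) + 1)))
    · intro i i' hii
      match i, i' with
      | Sum.inl a, Sum.inl b =>
        have := hprim.pow_inj (i := (a : ℕ) + 1) (j := (b : ℕ) + 1)
          (by have := a.isLt; omega) (by have := b.isLt; omega) hii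
        exact congrArg Sum.inl (Fin.ext (by omega))
      | Sum.inl a, Sum.inr b =>
        have := hprim.pow_inj (i := (a : ℕ) + 1) (j := 2 * r - ((b : ℕ) + 1))
          (by have := a.isLt; omega) (by omega) hii
        exfalso
        have ha := a.isLt; have hb := b.isLt; omega
      | Sum.inr a, Sum.inl b =>
        have := hprim.pow_inj (i := 2 * r - ((a : ℕ) + 1)) (j := (b : ℕ) + 1)
          (by omega) (by have := b.isLt; omega) hii
        exfalso
        have ha := a.isLt; have hb := b.isLt; omega
      | Sum.inr a, Sum.inr b =>
        have := hprim.pow_inj (i := 2 * r - ((a : ℕ) + 1)) (j := 2 * r - ((b : ℕ) + 1))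
          (by omega) (by omega) hii
        have ha := a.isLt; have hb := b.isLt
        exact congrArg Sum.inr (Fin.ext (by omega))
    · intro i
      match i with
      | Sum.inl k =>
        rw [heval ((k : ℕ) + 1)]
        have : S (((k : ℕ) + 1 : ℕ) : ℤ) = 0 := by
          have := hSzero k; push_cast; push_cast at this; exact this
        rw [this, mul_zero]
      | Sum.inr k =>
        rw [heval (2 * r - ((k : ℕ) + 1))]
        have hk := k.isLt
        have hc2 : ((2 * r - ((k : ℕ) + 1) : ℕ) : ℤ) = 2 * (r : ℤ) - ((k : ℤ) + 1) := by omega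
        have : S (((2 * r - ((k : ℕ) + 1) : ℕ) : ℤ)) = 0 := by
          rw [hc2, show 2 * (r : ℤ) - ((k : ℤ) + 1) = -((k : ℤ) + 1) + 2 * r from by ring,
            hSper, hSneg]
          exact hSzero k
        rw [this, mul_zero]
    · rw [Fintype.card_sum, Fintype.card_fin]
      omega
  -- extract the coefficients
  have hcoeff : P.coeff (r - 2 + (q : ℕ)) = (if (q : ℕ) = 0 then 2 else 1) * c q := by
    rw [hP]
    rw [Polynomial.finset_sum_coeff]
    simp only [Polynomial.coeff_C_mul, Polynomial.coeff_add, Polynomial.coeff_X_pow]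
    have hq := q.isLt
    rw [Finset.sum_eq_single q ?_ ?_]
    · rcases eq_or_ne ((q : ℕ)) 0 with h0 | h0
      · rw [if_pos rfl, if_pos (by omega), if_pos h0]
        ring
      · rw [if_pos rfl, if_neg (by omega), if_neg h0]
        ring
    · intro b _ hb
      have hb' : (b : ℕ) ≠ (q : ℕ) := fun hh => hb (Fin.ext hh)
      have hblt := b.isLt
      rw [if_neg (by omega), if_neg (by omega)]
      ring
    · intro hq'
      exact absurd (Finset.mem_univ q) hq'
  rw [hP0] at hcoeff
  simp only [Polynomial.coeff_zero] at hcoeff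
  rcases eq_or_ne ((q : ℕ)) 0 with h0 | h0
  · rw [if_pos h0] at hcoeff
    have : (2 : ℂ) ≠ 0 := two_ne_zero
    field_simp at hcoeff
    exact (mul_eq_zero.mp hcoeff.symm).resolve_left this
  · rw [if_neg h0, one_mul] at hcoeff
    exact hcoeff.symm

end CmatAux

open CmatAux in
/-- The `r−1` diagonal matrices `C(0,q)`, `0 ≤ q ≤ r−2`, form a basis of the space of
diagonal `(r−1)×(r−1)` complex matrices: they are linearly independent and a matrix is
diagonal if and only if it lies in their span. -/
theorem Cmat_zero_q_basis_of_diagonal (r : ℕ) (hr : 2 ≤ r) :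
    LinearIndependent ℂ (fun q : Fin (r - 1) => Cmat r 0 (q : ℤ)) ∧
      ∀ A : Matrix (Fin (r - 1)) (Fin (r - 1)) ℂ,
        A.IsDiag ↔ A ∈ Submodule.span ℂ (Set.range fun q : Fin (r - 1) => Cmat r 0 (q : ℤ)) := by
  have hli := dvec_li r hr
  have hCd : ∀ q : Fin (r - 1), Cmat r 0 (q : ℤ) = Matrix.diagonal (dvec r (q : ℤ)) :=
    fun q => Cmat_zero r hr _
  set diagLM : (Fin (r - 1) → ℂ) →ₗ[ℂ] Matrix (Fin (r - 1)) (Fin (r - 1)) ℂ :=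
    Matrix.diagonalLinearMap (n := Fin (r - 1)) (α := ℂ) (R := ℂ) with hdiagLM
  have hdiagLM_apply : ∀ d, diagLM d = Matrix.diagonal d := fun _ => rfl
  have hker : LinearMap.ker diagLM = ⊥ :=
    LinearMap.ker_eq_bot.mpr Matrix.diagonal_injective
  constructor
  · have h2 := hli.map' diagLM hker
    have heq : (fun q : Fin (r - 1) => Cmat r 0 (q : ℤ)) =
        (diagLM ∘ fun q : Fin (r - 1) => dvec r (q : ℤ)) := by
      funext q
      rw [Function.comp_apply, hdiagLM_apply, hCd]
    rw [heq]
    exact h2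
  · intro A
    constructor
    · intro hA
      have : Nonempty (Fin (r - 1)) := ⟨⟨0, by omega⟩⟩
      have hsp : Submodule.span ℂ (Set.range fun q : Fin (r - 1) => dvec r (q : ℤ)) = ⊤ := by
        apply hli.span_eq_top_of_card_eq_finrank
        simp [Module.finrank_fintype_fun_eq_card]
      have hd : A.diag ∈ Submodule.span ℂ (Set.range fun q : Fin (r - 1) => dvec r (q : ℤ)) := by
        rw [hsp]; exact Submodule.mem_top
      rw [Submodule.mem_span_range_iff_exists_fun] at hd
      obtain ⟨cc, hcc⟩ := hd
      have hAeq : A = ∑ q : Fin (r - 1), cc q • Cmat r 0 (q : ℤ) := by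
        calc A = Matrix.diagonal A.diag := hA.diagonal_diag.symm
          _ = diagLM (∑ q : Fin (r - 1), cc q • dvec r (q : ℤ)) := by rw [hcc, hdiagLM_apply]
          _ = ∑ q : Fin (r - 1), cc q • diagLM (dvec r (q : ℤ)) := by
              rw [map_sum]
              simp
          _ = ∑ q : Fin (r - 1), cc q • Cmat r 0 (q : ℤ) := by
              apply Finset.sum_congr rfl
              intro q _
              rw [hdiagLM_apply, hCd]
      rw [hAeq]
      exact Submodule.sum_smul_mem _ _ (fun q _ => Submodule.subset_span ⟨q, rfl⟩)
    · intro hA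
      refine Submodule.span_induction ?_ ?_ ?_ ?_ hA
      · rintro x ⟨q, rfl⟩
        show (Cmat r 0 (q : ℤ)).IsDiag
        rw [hCd]
        exact Matrix.isDiag_diagonal _
      · exact Matrix.isDiag_zero
      · exact fun x y _ _ hx hy => hx.add hy
      · exact fun a x _ hx => hx.smul a
end
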